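/- arXiv:2010.07452 — 3 statements merged into one kernel-verified Lean document; each statement's English description precedes it below -/
import Mathlib

section
/- Let X be a Borel subset of ℝ^m, Y a finite set, U a finite set, T a transition kernel from X×U to X and Q an observation kernel from X to Y, and let η be the associated belief transition kernel. Assume that for some α_X < ∞ one has ‖T(·|x,u) − T(·|x',u)‖_TV ≤ α_X |x − x'| for all x, x' ∈ X and all u ∈ U. Then for every z, z' ∈ P(X), every u ∈ U, and every sequence (f_m)_{m≥1} of measurable functions f_m : X → ℝ with ‖f_m‖_∞ ≤ 1, one has ρ_BL^ρ(η(·|z,u), η(·|z',u)) ≤ 3(1 + α_X) ρ_BL(z, z'), where ρ_BL on the right-hand side is the bounded-Lipschitz metric on P(X) induced by the Euclidean metric on X. -/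
open MeasureTheory

noncomputable section

/-- `‖f‖_BL ≤ c` with respect to the distance-like function `d`:
there are `a, b ≥ 0` with `a + b ≤ c` such that `f` is bounded by `a` and
`b`-Lipschitz with respect to `d`. -/
def blNormLE {S : Type*} (d : S → S → ℝ) (f : S → ℝ) (c : ℝ) : Prop :=
  ∃ a b : ℝ, 0 ≤ a ∧ 0 ≤ b ∧ a + b ≤ c ∧ (∀ x, |f x| ≤ a) ∧
    ∀ x y, |f x - f y| ≤ b * d x y

/-- Bounded-Lipschitz distance between two measures, induced by `d`. -/
def blDist {S : Type*} [MeasurableSpace S] (d : S → S → ℝ) (μ ν : Measure S) : ℝ :=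
  sSup {r | ∃ f : S → ℝ, Measurable f ∧ blNormLE d f 1 ∧
    r = |∫ x, f x ∂μ - ∫ x, f x ∂ν|}

/-- Total variation distance between two measures. -/
def tvDist {S : Type*} [MeasurableSpace S] (μ ν : Measure S) : ℝ :=
  sSup {r | ∃ f : S → ℝ, Measurable f ∧ (∀ x, |f x| ≤ 1) ∧
    r = |∫ x, f x ∂μ - ∫ x, f x ∂ν|}

variable {X Y U : Type*} [MeasurableSpace X] [Fintype Y]

/-- One-step push-forward `zT_u` of a belief `z` through the transition kernel `T`. -/
def beliefPush (T : X → U → Measure X) (z : Measure X) (u : U) : Measure X :=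
  z.bind fun x => T x u

/-- Predictive probability `P(y|z,u) = ∫ Q(y|x₁) (zT_u)(dx₁)` of observing `y`. -/
def obsProb (T : X → U → Measure X) (Q : X → Y → ℝ) (z : Measure X) (u : U) (y : Y) : ℝ :=
  ∫ x, Q x y ∂(beliefPush T z u)

/-- Bayes update `F(z,u,y)` of the belief `z` after applying `u` and observing `y`. -/
def bayes (T : X → U → Measure X) (Q : X → Y → ℝ) (z : Measure X) (u : U) (y : Y) :
    Measure X :=
  (ENNReal.ofReal (obsProb T Q z u y))⁻¹ •
    ((beliefPush T z u).withDensity fun x => ENNReal.ofReal (Q x y))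

/-- Integral of a function `f` on beliefs against the belief transition kernel
`η(·|z,u) = Σ_{y : P(y|z,u) > 0} P(y|z,u) δ_{F(z,u,y)}`. -/
def etaInt (T : X → U → Measure X) (Q : X → Y → ℝ) (f : Measure X → ℝ)
    (z : Measure X) (u : U) : ℝ :=
  ∑ y : Y, if 0 < obsProb T Q z u y then obsProb T Q z u y * f (bayes T Q z u y) else 0

/-- Bounded-Lipschitz distance (with respect to a pseudometric `ρ` on beliefs)
between `η(·|z,u)` and `η(·|z',u)`. -/
def etaBLDist (T : X → U → Measure X) (Q : X → Y → ℝ)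
    (ρ : Measure X → Measure X → ℝ) (z z' : Measure X) (u : U) : ℝ :=
  sSup {r | ∃ f : Measure X → ℝ, blNormLE ρ f 1 ∧
    r = |etaInt T Q f z u - etaInt T Q f z' u|}

/-- The pseudometric `ρ(μ,ν) = Σ_{m ≥ 1} 2^{-(m+1)} |∫ f_m dμ - ∫ f_m dν|` on beliefs
induced by the sequence of test functions `fs` (with `fs k` playing the role of `f_{k+1}`). -/
def rhoSeq (fs : ℕ → X → ℝ) (μ ν : Measure X) : ℝ :=
  ∑' k : ℕ, (2 : ℝ)⁻¹ ^ (k + 2) * |∫ x, fs k x ∂μ - ∫ x, fs k x ∂ν|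

/-- Dobrushin coefficient of an observation channel `Q` into a finite set. -/
def dobrushinObs (Q : X → Y → ℝ) : ℝ :=
  ⨅ p : X × X, ∑ y : Y, min (Q p.1 y) (Q p.2 y)

/-- Dobrushin coefficient of a Markov kernel `K`, via finite measurable partitions. -/
def dobrushinKernel (K : X → Measure X) : ℝ :=
  sInf {r | ∃ (x x' : X) (n : ℕ) (A : Fin n → Set X),
    (∀ i, MeasurableSet (A i)) ∧ Pairwise (Function.onFun Disjoint A) ∧
    (⋃ i, A i) = Set.univ ∧
    r = ∑ i, min ((K x (A i)).toReal) ((K x' (A i)).toReal)}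

/-- `δ̃(T) = inf_u δ(T(·|·,u))`. -/
def dobrushinTrans (T : X → U → Measure X) : ℝ :=
  ⨅ u : U, dobrushinKernel fun x => T x u

end

noncomputable section KaraAux

open MeasureTheory

namespace KaraAux

variable {S : Type*} [MeasurableSpace S]

lemma integrable_of_abs_le (μ : Measure S) [IsFiniteMeasure μ] {f : S → ℝ} (hf : Measurable f)
    {C : ℝ} (hb : ∀ x, |f x| ≤ C) : Integrable f μ :=
  ⟨hf.aestronglyMeasurable,
    HasFiniteIntegral.of_bounded (C := C) (Filter.Eventually.of_forall fun x => by
      simpa [Real.norm_eq_abs] using hb x)⟩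

lemma abs_integral_le (μ : Measure S) [IsProbabilityMeasure μ] {f : S → ℝ} {C : ℝ}
    (hb : ∀ x, |f x| ≤ C) : |∫ x, f x ∂μ| ≤ C := by
  have h := norm_integral_le_of_norm_le_const (μ := μ) (f := f) (C := C)
      (Filter.Eventually.of_forall fun x => by simpa [Real.norm_eq_abs] using hb x)
  simpa [Real.norm_eq_abs, measure_univ] using h

lemma le_tvDist (μ ν : Measure S) [IsProbabilityMeasure μ] [IsProbabilityMeasure ν]
    {f : S → ℝ} (hf : Measurable f) (hb : ∀ x, |f x| ≤ 1) :
    |∫ x, f x ∂μ - ∫ x, f x ∂ν| ≤ tvDist μ ν := by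
  apply le_csSup
  · refine ⟨2, ?_⟩
    rintro r ⟨g, hg, hgb, rfl⟩
    calc |∫ x, g x ∂μ - ∫ x, g x ∂ν| ≤ |∫ x, g x ∂μ| + |∫ x, g x ∂ν| := abs_sub _ _
      _ ≤ 1 + 1 := add_le_add (abs_integral_le μ hgb) (abs_integral_le ν hgb)
      _ = 2 := by norm_num
  · exact ⟨f, hf, hb, rfl⟩

lemma tvDist_nonneg (μ ν : Measure S) : 0 ≤ tvDist μ ν :=
  Real.sSup_nonneg (by rintro r ⟨g, -, -, rfl⟩; exact abs_nonneg _)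

lemma blDist_nonneg (d : S → S → ℝ) (μ ν : Measure S) : 0 ≤ blDist d μ ν :=
  Real.sSup_nonneg (by rintro r ⟨g, -, -, rfl⟩; exact abs_nonneg _)

lemma le_blDist (d : S → S → ℝ) (μ ν : Measure S) [IsProbabilityMeasure μ]
    [IsProbabilityMeasure ν] {f : S → ℝ} (hf : Measurable f) (hbl : blNormLE d f 1) :
    |∫ x, f x ∂μ - ∫ x, f x ∂ν| ≤ blDist d μ ν := by
  apply le_csSup
  · refine ⟨2, ?_⟩
    rintro r ⟨g, hg, ⟨a, b, ha, hb, hab, hga, -⟩, rfl⟩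
    have hga1 : ∀ x, |g x| ≤ 1 := fun x => (hga x).trans (by linarith)
    calc |∫ x, g x ∂μ - ∫ x, g x ∂ν| ≤ |∫ x, g x ∂μ| + |∫ x, g x ∂ν| := abs_sub _ _
      _ ≤ 1 + 1 := add_le_add (abs_integral_le μ hga1) (abs_integral_le ν hga1)
      _ = 2 := by norm_num
  · exact ⟨f, hf, hbl, rfl⟩

lemma lintegral_shift (μ : Measure S) [IsProbabilityMeasure μ] {ψ : S → ℝ}
    (hψ : Measurable ψ) (hb : ∀ x, |ψ x| ≤ 1) :
    ∫⁻ t, ENNReal.ofReal (ψ t + 1) ∂μ = ENNReal.ofReal ((∫ t, ψ t ∂μ) + 1) := by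
  have hint : Integrable (fun t => ψ t + 1) μ :=
    integrable_of_abs_le μ (hψ.add measurable_const) (C := 2)
      (fun t => by have := abs_le.1 (hb t); rw [abs_le]; constructor <;> linarith)
  have hnn : 0 ≤ᵐ[μ] fun t => ψ t + 1 :=
    Filter.Eventually.of_forall fun t => by have := abs_le.1 (hb t); simp; linarith
  rw [← ofReal_integral_eq_lintegral_ofReal hint hnn]
  congr 1
  rw [integral_add (integrable_of_abs_le μ hψ (C := 1) hb) (integrable_const 1)]
  simp

lemma measurable_kernel_integral {κ : S → Measure S} (hκ : Measurable κ)
    (hκp : ∀ x, IsProbabilityMeasure (κ x)) {ψ : S → ℝ} (hψ : Measurable ψ)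
    (hb : ∀ x, |ψ x| ≤ 1) : Measurable fun x => ∫ t, ψ t ∂(κ x) := by
  have heq : (fun x => ∫ t, ψ t ∂(κ x))
      = fun x => (∫⁻ t, ENNReal.ofReal (ψ t + 1) ∂(κ x)).toReal - 1 := by
    funext x
    haveI := hκp x
    rw [lintegral_shift (κ x) hψ hb, ENNReal.toReal_ofReal]
    · ring
    · have := abs_le.1 (abs_integral_le (κ x) hb); linarith
  rw [heq]
  exact (((Measure.measurable_lintegral
    (ENNReal.measurable_ofReal.comp (hψ.add measurable_const))).comp hκ).ennreal_toReal).sub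
    measurable_const

lemma isProbabilityMeasure_bind (z : Measure S) [IsProbabilityMeasure z] {κ : S → Measure S}
    (hκ : Measurable κ) (hκp : ∀ x, IsProbabilityMeasure (κ x)) :
    IsProbabilityMeasure (z.bind κ) := by
  constructor
  rw [Measure.bind_apply MeasurableSet.univ hκ.aemeasurable]
  have : ∀ x, κ x Set.univ = 1 := fun x => (hκp x).measure_univ
  simp [this]

lemma integral_bind_eq (z : Measure S) [IsProbabilityMeasure z] {κ : S → Measure S}
    (hκ : Measurable κ) (hκp : ∀ x, IsProbabilityMeasure (κ x)) {ψ : S → ℝ}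
    (hψ : Measurable ψ) (hb : ∀ x, |ψ x| ≤ 1) :
    ∫ t, ψ t ∂(z.bind κ) = ∫ x, (∫ t, ψ t ∂(κ x)) ∂z := by
  haveI := isProbabilityMeasure_bind z hκ hκp
  have hφm : Measurable fun t => ENNReal.ofReal (ψ t + 1) :=
    ENNReal.measurable_ofReal.comp (hψ.add measurable_const)
  have hGm : Measurable fun x => ∫ t, ψ t ∂(κ x) := measurable_kernel_integral hκ hκp hψ hb
  have hGb : ∀ x, |∫ t, ψ t ∂(κ x)| ≤ 1 := fun x => by
    haveI := hκp x; exact abs_integral_le (κ x) hb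
  have key : ENNReal.ofReal ((∫ t, ψ t ∂(z.bind κ)) + 1)
      = ENNReal.ofReal ((∫ x, (∫ t, ψ t ∂(κ x)) ∂z) + 1) := by
    rw [← lintegral_shift (z.bind κ) hψ hb, Measure.lintegral_bind hκ.aemeasurable hφm.aemeasurable]
    have hin : ∀ x, (∫⁻ t, ENNReal.ofReal (ψ t + 1) ∂(κ x))
        = ENNReal.ofReal ((∫ t, ψ t ∂(κ x)) + 1) := fun x => by
      haveI := hκp x; exact lintegral_shift (κ x) hψ hb
    simp_rw [hin]
    rw [← ofReal_integral_eq_lintegral_ofReal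
      (integrable_of_abs_le z (f := fun x => (∫ t, ψ t ∂(κ x)) + 1) (hGm.add measurable_const) (C := 2)
        (fun x => by have := abs_le.1 (hGb x); rw [abs_le]; constructor <;> linarith))
      (Filter.Eventually.of_forall fun x => by
        have := abs_le.1 (hGb x); simp; linarith)]
    congr 1
    rw [integral_add (integrable_of_abs_le z hGm (C := 1) hGb) (integrable_const 1)]
    simp
  have h1 : (0:ℝ) ≤ (∫ t, ψ t ∂(z.bind κ)) + 1 := by
    have := abs_le.1 (abs_integral_le (z.bind κ) hb); linarith
  have h2 : (0:ℝ) ≤ (∫ x, (∫ t, ψ t ∂(κ x)) ∂z) + 1 := by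
    have := abs_le.1 (abs_integral_le z hGb); linarith
  have := (ENNReal.ofReal_eq_ofReal_iff h1 h2).1 key
  linarith

section Metric

variable {X : Type*} [MeasurableSpace X] [PseudoMetricSpace X] {Y : Type*} [Fintype Y]

lemma kara_combo_bound {κ : X → Measure X} (hκ : Measurable κ)
    (hκp : ∀ x, IsProbabilityMeasure (κ x)) {αX : ℝ} (hα : 0 ≤ αX)
    (hlip : ∀ x x', tvDist (κ x) (κ x') ≤ αX * dist x x')
    (z z' : Measure X) [IsProbabilityMeasure z] [IsProbabilityMeasure z']
    {ψ : X → ℝ} (hψ : Measurable ψ) (hb : ∀ x, |ψ x| ≤ 1) :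
    |∫ t, ψ t ∂(z.bind κ) - ∫ t, ψ t ∂(z'.bind κ)|
      ≤ (1 + αX) * blDist (fun a b : X => dist a b) z z' := by
  rw [integral_bind_eq z hκ hκp hψ hb, integral_bind_eq z' hκ hκp hψ hb]
  have hGm : Measurable fun x => ∫ t, ψ t ∂(κ x) := measurable_kernel_integral hκ hκp hψ hb
  have hGb : ∀ x, |∫ t, ψ t ∂(κ x)| ≤ 1 := fun x => by
    haveI := hκp x; exact abs_integral_le (κ x) hb
  have hGlip : ∀ x x', |(∫ t, ψ t ∂(κ x)) - ∫ t, ψ t ∂(κ x')| ≤ αX * dist x x' := by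
    intro x x'
    haveI := hκp x; haveI := hκp x'
    exact (le_tvDist (κ x) (κ x') hψ hb).trans (hlip x x')
  have hpos : (0:ℝ) < 1 + αX := by linarith
  have hinv : (0:ℝ) ≤ (1 + αX)⁻¹ := inv_nonneg.2 hpos.le
  have hbl : blNormLE (fun a b : X => dist a b)
      (fun x => (1 + αX)⁻¹ * ∫ t, ψ t ∂(κ x)) 1 := by
    refine ⟨(1 + αX)⁻¹, (1 + αX)⁻¹ * αX, hinv, mul_nonneg hinv hα, ?_, fun x => ?_,
      fun x x' => ?_⟩
    · have : (1 + αX)⁻¹ * (1 + αX) = 1 := inv_mul_cancel₀ hpos.ne'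
      nlinarith
    · rw [abs_mul, abs_of_nonneg hinv]
      calc (1 + αX)⁻¹ * |∫ t, ψ t ∂(κ x)| ≤ (1 + αX)⁻¹ * 1 :=
            mul_le_mul_of_nonneg_left (hGb x) hinv
        _ = (1 + αX)⁻¹ := mul_one _
    · rw [← mul_sub, abs_mul, abs_of_nonneg hinv, mul_assoc]
      exact mul_le_mul_of_nonneg_left (hGlip x x') hinv
  have hkey := le_blDist (fun a b : X => dist a b) z z' (hGm.const_mul _) hbl
  rw [integral_const_mul, integral_const_mul, ← mul_sub, abs_mul, abs_of_nonneg hinv] at hkey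
  calc |(∫ x, (∫ t, ψ t ∂(κ x)) ∂z) - ∫ x, (∫ t, ψ t ∂(κ x)) ∂z'|
      = (1 + αX) * ((1 + αX)⁻¹ * |(∫ x, (∫ t, ψ t ∂(κ x)) ∂z) - ∫ x, (∫ t, ψ t ∂(κ x)) ∂z'|) := by
        rw [← mul_assoc, mul_inv_cancel₀ hpos.ne', one_mul]
    _ ≤ (1 + αX) * blDist (fun a b : X => dist a b) z z' :=
        mul_le_mul_of_nonneg_left hkey hpos.le

end Metric

section EtaHelpers

variable {X : Type*} [MeasurableSpace X] {Y : Type*} [Fintype Y] {U : Type*}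

lemma obsProb_nonneg (T : X → U → Measure X) (Q : X → Y → ℝ)
    (hQ_nonneg : ∀ x y, 0 ≤ Q x y) (z : Measure X) (u : U) (y : Y) :
    0 ≤ obsProb T Q z u y :=
  integral_nonneg fun t => hQ_nonneg t y

lemma etaInt_eq_sum (T : X → U → Measure X) (Q : X → Y → ℝ)
    (hQ_nonneg : ∀ x y, 0 ≤ Q x y) (f : Measure X → ℝ) (z : Measure X) (u : U) :
    etaInt T Q f z u = ∑ y : Y, obsProb T Q z u y * f (bayes T Q z u y) := by
  simp only [etaInt]
  refine Finset.sum_congr rfl fun y _ => ?_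
  by_cases h : 0 < obsProb T Q z u y
  · rw [if_pos h]
  · rw [if_neg h, le_antisymm (not_lt.1 h) (obsProb_nonneg T Q hQ_nonneg z u y), zero_mul]

lemma integral_bayes (T : X → U → Measure X) (Q : X → Y → ℝ)
    (hQ_meas : ∀ y, Measurable fun x => Q x y) (hQ_nonneg : ∀ x y, 0 ≤ Q x y)
    (z : Measure X) (u : U) (y : Y) (g : X → ℝ) :
    ∫ t, g t ∂(bayes T Q z u y)
      = (∫ t, g t * Q t y ∂(beliefPush T z u)) / obsProb T Q z u y := by
  simp only [bayes]
  rw [integral_smul_measure]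
  have hd : (fun x => ENNReal.ofReal (Q x y))
      = fun x => ((Real.toNNReal (Q x y) : NNReal) : ENNReal) := rfl
  rw [hd, integral_withDensity_eq_integral_smul (f := fun x => Real.toNNReal (Q x y)) ((hQ_meas y).real_toNNReal)]
  have hcongr : (fun t => Real.toNNReal (Q t y) • g t) = fun t => g t * Q t y := by
    funext t
    rw [NNReal.smul_def, Real.coe_toNNReal _ (hQ_nonneg t y), smul_eq_mul]
    ring
  rw [hcongr, ENNReal.toReal_inv, ENNReal.toReal_ofReal (obsProb_nonneg T Q hQ_nonneg z u y),
    smul_eq_mul, inv_mul_eq_div]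

end EtaHelpers

section MainLemma

variable {X : Type*} [MeasurableSpace X] [PseudoMetricSpace X] {Y : Type*} [Fintype Y]
  {U : Type*}

lemma kara_main (T : X → U → Measure X) (hT_meas : ∀ u : U, Measurable fun x => T x u)
    (hT_prob : ∀ x u, IsProbabilityMeasure (T x u))
    (Q : X → Y → ℝ) (hQ_meas : ∀ y, Measurable fun x => Q x y)
    (hQ_nonneg : ∀ x y, 0 ≤ Q x y) (hQ_sum : ∀ x, ∑ y : Y, Q x y = 1)
    {αX : ℝ} (hα : 0 ≤ αX)
    (hT_lip : ∀ x x' u, tvDist (T x u) (T x' u) ≤ αX * dist x x')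
    (fs : ℕ → X → ℝ) (hfs_meas : ∀ k, Measurable (fs k)) (hfs_bdd : ∀ k x, |fs k x| ≤ 1)
    (z z' : Measure X) (hz : IsProbabilityMeasure z) (hz' : IsProbabilityMeasure z') (u : U) :
    etaBLDist T Q (rhoSeq fs) z z' u ≤
      3 * (1 + αX) * blDist (fun a b : X => dist a b) z z' := by
  haveI := hz; haveI := hz'
  classical
  have hBL0 : 0 ≤ blDist (fun a b : X => dist a b) z z' := blDist_nonneg _ z z'
  have hRHS0 : 0 ≤ 3 * (1 + αX) * blDist (fun a b : X => dist a b) z z' :=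
    mul_nonneg (by linarith) hBL0
  haveI hμp : IsProbabilityMeasure (beliefPush T z u) :=
    isProbabilityMeasure_bind z (hT_meas u) (fun x => hT_prob x u)
  haveI hμ'p : IsProbabilityMeasure (beliefPush T z' u) :=
    isProbabilityMeasure_bind z' (hT_meas u) (fun x => hT_prob x u)
  have hQ1 : ∀ x y, Q x y ≤ 1 := by
    intro x y
    have h := Finset.single_le_sum (f := fun i => Q x i) (fun i _ => hQ_nonneg x i)
      (Finset.mem_univ y)
    rw [hQ_sum x] at h
    exact h
  -- master estimate: integrating sign combinations of `Q` against the pushforwards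
  have master : ∀ (q : X → ℝ), Measurable q → (∀ t, |q t| ≤ 1) → ∀ c : Y → ℝ,
      (∀ y, |c y| ≤ 1) →
      |∑ y : Y, c y * ((∫ t, q t * Q t y ∂(beliefPush T z u))
        - ∫ t, q t * Q t y ∂(beliefPush T z' u))|
      ≤ (1 + αX) * blDist (fun a b : X => dist a b) z z' := by
    intro q hq hqb c hc
    have hψm : Measurable fun t => q t * ∑ y : Y, c y * Q t y :=
      hq.mul (Finset.measurable_sum Finset.univ fun y _ => ((hQ_meas y).const_mul (c y)))
    have hψb : ∀ t, |q t * ∑ y : Y, c y * Q t y| ≤ 1 := by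
      intro t
      rw [abs_mul]
      have h1 : |∑ y : Y, c y * Q t y| ≤ 1 := by
        calc |∑ y : Y, c y * Q t y| ≤ ∑ y : Y, |c y * Q t y| :=
            Finset.abs_sum_le_sum_abs _ _
          _ ≤ ∑ y : Y, Q t y := Finset.sum_le_sum fun y _ => by
              rw [abs_mul, abs_of_nonneg (hQ_nonneg t y)]
              exact mul_le_of_le_one_left (hQ_nonneg t y) (hc y)
          _ = 1 := hQ_sum t
      calc |q t| * |∑ y : Y, c y * Q t y| ≤ 1 * 1 :=
          mul_le_mul (hqb t) h1 (abs_nonneg _) zero_le_one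
        _ = 1 := one_mul 1
    have hint : ∀ (ν : Measure X), IsProbabilityMeasure ν → ∀ y : Y,
        Integrable (fun t => c y * (q t * Q t y)) ν := by
      intro ν hν y
      haveI := hν
      refine integrable_of_abs_le ν ((hq.mul (hQ_meas y)).const_mul (c y)) (C := 1) fun t => ?_
      rw [abs_mul, abs_mul, abs_of_nonneg (hQ_nonneg t y)]
      calc |c y| * (|q t| * Q t y) ≤ 1 * (1 * 1) :=
          mul_le_mul (hc y) (mul_le_mul (hqb t) (hQ1 t y) (hQ_nonneg t y) zero_le_one)
            (mul_nonneg (abs_nonneg _) (hQ_nonneg t y)) zero_le_one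
        _ = 1 := by norm_num
    have hexp : ∀ (ν : Measure X), IsProbabilityMeasure ν →
        ∫ t, q t * ∑ y : Y, c y * Q t y ∂ν = ∑ y : Y, c y * ∫ t, q t * Q t y ∂ν := by
      intro ν hν
      haveI := hν
      have h1 : (fun t => q t * ∑ y : Y, c y * Q t y)
          = fun t => ∑ y : Y, c y * (q t * Q t y) := by
        funext t; rw [Finset.mul_sum]; exact Finset.sum_congr rfl fun y _ => by ring
      rw [h1, integral_finset_sum Finset.univ (fun y _ => hint ν hν y)]
      exact Finset.sum_congr rfl fun y _ => integral_const_mul _ _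
    have hsum : ∑ y : Y, c y * ((∫ t, q t * Q t y ∂(beliefPush T z u))
          - ∫ t, q t * Q t y ∂(beliefPush T z' u))
        = (∫ t, q t * ∑ y : Y, c y * Q t y ∂(beliefPush T z u))
          - ∫ t, q t * ∑ y : Y, c y * Q t y ∂(beliefPush T z' u) := by
      rw [hexp _ hμp, hexp _ hμ'p, ← Finset.sum_sub_distrib]
      exact Finset.sum_congr rfl fun y _ => by ring
    rw [hsum]
    exact kara_combo_bound (hT_meas u) (fun x => hT_prob x u) hα
      (fun x x' => hT_lip x x' u) z z' hψm hψb
  have sum_abs : ∀ (q : X → ℝ), Measurable q → (∀ t, |q t| ≤ 1) →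
      ∑ y : Y, |(∫ t, q t * Q t y ∂(beliefPush T z u))
        - ∫ t, q t * Q t y ∂(beliefPush T z' u)|
      ≤ (1 + αX) * blDist (fun a b : X => dist a b) z z' := by
    intro q hq hqb
    have key := master q hq hqb
      (fun y => if 0 ≤ (∫ t, q t * Q t y ∂(beliefPush T z u))
          - ∫ t, q t * Q t y ∂(beliefPush T z' u) then (1:ℝ) else -1)
      (fun y => by split <;> norm_num)
    refine le_trans (le_of_eq ?_) ((le_abs_self _).trans key)
    refine Finset.sum_congr rfl fun y _ => ?_
    by_cases h : 0 ≤ (∫ t, q t * Q t y ∂(beliefPush T z u))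
        - ∫ t, q t * Q t y ∂(beliefPush T z' u)
    · rw [if_pos h, one_mul, abs_of_nonneg h]
    · rw [if_neg h, abs_of_neg (lt_of_not_ge h)]; ring
  have hΔp : ∑ y : Y, |obsProb T Q z u y - obsProb T Q z' u y|
      ≤ (1 + αX) * blDist (fun a b : X => dist a b) z z' := by
    have h := sum_abs (fun _ => (1:ℝ)) measurable_const (fun t => by norm_num)
    simp only [one_mul] at h
    exact h
  have hp0 : ∀ y, 0 ≤ obsProb T Q z u y := fun y => obsProb_nonneg T Q hQ_nonneg z u y
  have hp'0 : ∀ y, 0 ≤ obsProb T Q z' u y := fun y => obsProb_nonneg T Q hQ_nonneg z' u y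
  have habsN : ∀ (w : Measure X), IsProbabilityMeasure w → ∀ (k : ℕ) (y : Y),
      |∫ t, fs k t * Q t y ∂(beliefPush T w u)| ≤ obsProb T Q w u y := by
    intro w hw k y
    haveI := hw
    haveI : IsProbabilityMeasure (beliefPush T w u) :=
      isProbabilityMeasure_bind w (hT_meas u) (fun x => hT_prob x u)
    have h1 : |∫ t, fs k t * Q t y ∂(beliefPush T w u)|
        ≤ ∫ t, |fs k t * Q t y| ∂(beliefPush T w u) := by
      have := norm_integral_le_integral_norm (μ := beliefPush T w u)
        (f := fun t => fs k t * Q t y)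
      simpa only [Real.norm_eq_abs] using this
    have h2 : ∫ t, |fs k t * Q t y| ∂(beliefPush T w u)
        ≤ ∫ t, Q t y ∂(beliefPush T w u) := by
      refine integral_mono (integrable_of_abs_le _ ((hfs_meas k).mul (hQ_meas y)).abs
        (C := 1) (fun t => ?_)) (integrable_of_abs_le _ (hQ_meas y) (C := 1)
        (fun t => ?_)) (fun t => ?_)
      · rw [abs_abs, abs_mul]
        calc |fs k t| * |Q t y| ≤ 1 * 1 := mul_le_mul (hfs_bdd k t)
              (by rw [abs_of_nonneg (hQ_nonneg t y)]; exact hQ1 t y) (abs_nonneg _) zero_le_one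
          _ = 1 := one_mul 1
      · rw [abs_of_nonneg (hQ_nonneg t y)]; exact hQ1 t y
      · rw [abs_mul, abs_of_nonneg (hQ_nonneg t y)]
        exact mul_le_of_le_one_left (hQ_nonneg t y) (hfs_bdd k t)
    exact h1.trans h2
  have hbayes : ∀ (w : Measure X) (y : Y) (k : ℕ),
      ∫ t, fs k t ∂(bayes T Q w u y)
        = (∫ t, fs k t * Q t y ∂(beliefPush T w u)) / obsProb T Q w u y :=
    fun w y k => integral_bayes T Q hQ_meas hQ_nonneg w u y (fs k)
  -- geometric weights
  have hw0 : ∀ k : ℕ, (0:ℝ) ≤ (2:ℝ)⁻¹ ^ (k + 2) := fun k => by positivity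
  have summ_w : Summable (fun k : ℕ => (2:ℝ)⁻¹ ^ (k + 2)) := by
    have h := summable_geometric_of_lt_one (r := (2:ℝ)⁻¹) (by norm_num) (by norm_num)
    exact ((h.mul_left ((2:ℝ)⁻¹ ^ 2)).congr fun k => by ring)
  have summ_aux : ∀ (C : ℝ) (g : ℕ → ℝ), (∀ k, 0 ≤ g k) → (∀ k, g k ≤ C) →
      Summable fun k => (2:ℝ)⁻¹ ^ (k + 2) * g k := by
    intro C g h0 hC
    exact Summable.of_nonneg_of_le (fun k => mul_nonneg (hw0 k) (h0 k))
      (fun k => mul_le_mul_of_nonneg_left (hC k) (hw0 k)) (summ_w.mul_right C)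
  have tsum_w : ∑' k : ℕ, (2:ℝ)⁻¹ ^ (k + 2) = 2⁻¹ := by
    have h : (fun k : ℕ => (2:ℝ)⁻¹ ^ (k + 2)) = fun k : ℕ => (2:ℝ)⁻¹ ^ 2 * (2:ℝ)⁻¹ ^ k := by
      funext k; ring
    rw [h, tsum_mul_left, tsum_geometric_of_lt_one (by norm_num) (by norm_num)]
    norm_num
  have hsummg : ∀ y : Y, Summable fun k : ℕ => (2:ℝ)⁻¹ ^ (k + 2)
      * (|(∫ t, fs k t * Q t y ∂(beliefPush T z u))
          - ∫ t, fs k t * Q t y ∂(beliefPush T z' u)|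
        + |obsProb T Q z u y - obsProb T Q z' u y|) := by
    intro y
    refine summ_aux (obsProb T Q z u y + obsProb T Q z' u y
      + |obsProb T Q z u y - obsProb T Q z' u y|) _
      (fun k => add_nonneg (abs_nonneg _) (abs_nonneg _)) (fun k => ?_)
    have h1 : |(∫ t, fs k t * Q t y ∂(beliefPush T z u))
        - ∫ t, fs k t * Q t y ∂(beliefPush T z' u)|
        ≤ |∫ t, fs k t * Q t y ∂(beliefPush T z u)|
          + |∫ t, fs k t * Q t y ∂(beliefPush T z' u)| := abs_sub _ _
    have h2 := habsN z hz k y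
    have h3 := habsN z' hz' k y
    linarith
  -- the supremum bound
  refine Real.sSup_le ?_ hRHS0
  rintro r ⟨f, ⟨a, b, ha0, hb0, hab, hfa, hflip⟩, rfl⟩
  rw [etaInt_eq_sum T Q hQ_nonneg f z u, etaInt_eq_sum T Q hQ_nonneg f z' u]
  have hsplit : (∑ y : Y, obsProb T Q z u y * f (bayes T Q z u y))
      - ∑ y : Y, obsProb T Q z' u y * f (bayes T Q z' u y)
      = (∑ y : Y, (obsProb T Q z u y - obsProb T Q z' u y) * f (bayes T Q z u y))
        + ∑ y : Y, obsProb T Q z' u y * (f (bayes T Q z u y) - f (bayes T Q z' u y)) := by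
    rw [← Finset.sum_add_distrib, ← Finset.sum_sub_distrib]
    exact Finset.sum_congr rfl fun y _ => by ring
  rw [hsplit]
  have hfa1 : ∀ w, |f w| ≤ 1 := fun w => (hfa w).trans (by linarith)
  have hT1 : |∑ y : Y, (obsProb T Q z u y - obsProb T Q z' u y) * f (bayes T Q z u y)|
      ≤ (1 + αX) * blDist (fun a b : X => dist a b) z z' := by
    have h := master (fun _ => (1:ℝ)) measurable_const (fun t => by norm_num)
      (fun y => f (bayes T Q z u y)) (fun y => hfa1 _)
    simp only [one_mul] at h
    have he : ∑ y : Y, (obsProb T Q z u y - obsProb T Q z' u y) * f (bayes T Q z u y)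
        = ∑ y : Y, f (bayes T Q z u y)
          * ((∫ t, Q t y ∂(beliefPush T z u)) - ∫ t, Q t y ∂(beliefPush T z' u)) :=
      Finset.sum_congr rfl fun y _ => mul_comm _ _
    rw [he]
    exact h
  have perY : ∀ y : Y,
      |obsProb T Q z' u y * (f (bayes T Q z u y) - f (bayes T Q z' u y))|
      ≤ 2 * a * |obsProb T Q z u y - obsProb T Q z' u y|
        + b * ∑' k : ℕ, (2:ℝ)⁻¹ ^ (k + 2)
            * (|(∫ t, fs k t * Q t y ∂(beliefPush T z u))
                - ∫ t, fs k t * Q t y ∂(beliefPush T z' u)|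
              + |obsProb T Q z u y - obsProb T Q z' u y|) := by
    intro y
    have hts0 : 0 ≤ ∑' k : ℕ, (2:ℝ)⁻¹ ^ (k + 2)
        * (|(∫ t, fs k t * Q t y ∂(beliefPush T z u))
            - ∫ t, fs k t * Q t y ∂(beliefPush T z' u)|
          + |obsProb T Q z u y - obsProb T Q z' u y|) :=
      tsum_nonneg fun k => mul_nonneg (hw0 k) (add_nonneg (abs_nonneg _) (abs_nonneg _))
    rcases eq_or_lt_of_le (hp'0 y) with h0' | hpos'
    · have hz0 : obsProb T Q z' u y * (f (bayes T Q z u y) - f (bayes T Q z' u y)) = 0 := by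
        rw [← h0', zero_mul]
      rw [hz0, abs_zero]
      have h1 : 0 ≤ 2 * a * |obsProb T Q z u y - obsProb T Q z' u y| := by positivity
      exact add_nonneg h1 (mul_nonneg hb0 hts0)
    rcases eq_or_lt_of_le (hp0 y) with h0 | hpos
    · have h1 : |obsProb T Q z' u y * (f (bayes T Q z u y) - f (bayes T Q z' u y))|
          ≤ obsProb T Q z' u y * (2 * a) := by
        rw [abs_mul, abs_of_pos hpos']
        refine mul_le_mul_of_nonneg_left ?_ hpos'.le
        calc |f (bayes T Q z u y) - f (bayes T Q z' u y)|
            ≤ |f (bayes T Q z u y)| + |f (bayes T Q z' u y)| := abs_sub _ _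
          _ ≤ a + a := add_le_add (hfa _) (hfa _)
          _ = 2 * a := by ring
      have h2 : obsProb T Q z' u y = |obsProb T Q z u y - obsProb T Q z' u y| := by
        rw [← h0, zero_sub, abs_neg, abs_of_pos hpos']
      calc |obsProb T Q z' u y * (f (bayes T Q z u y) - f (bayes T Q z' u y))|
          ≤ obsProb T Q z' u y * (2 * a) := h1
        _ = 2 * a * |obsProb T Q z u y - obsProb T Q z' u y| := by rw [← h2]; ring
        _ ≤ _ := le_add_of_nonneg_right (mul_nonneg hb0 hts0)
    · -- both `p y` and `p' y` positive
      have hkey : ∀ k : ℕ, obsProb T Q z' u y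
            * |∫ t, fs k t ∂(bayes T Q z u y) - ∫ t, fs k t ∂(bayes T Q z' u y)|
          ≤ |(∫ t, fs k t * Q t y ∂(beliefPush T z u))
              - ∫ t, fs k t * Q t y ∂(beliefPush T z' u)|
            + |obsProb T Q z u y - obsProb T Q z' u y| := by
        intro k
        rw [hbayes z y k, hbayes z' y k]
        have e1 : obsProb T Q z' u y
            * ((∫ t, fs k t * Q t y ∂(beliefPush T z u)) / obsProb T Q z u y
              - (∫ t, fs k t * Q t y ∂(beliefPush T z' u)) / obsProb T Q z' u y)
            = ((∫ t, fs k t * Q t y ∂(beliefPush T z u))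
                - ∫ t, fs k t * Q t y ∂(beliefPush T z' u))
              + (obsProb T Q z' u y - obsProb T Q z u y)
                * ((∫ t, fs k t * Q t y ∂(beliefPush T z u)) / obsProb T Q z u y) := by
          field_simp
          ring
        have e0 : obsProb T Q z' u y
            * |(∫ t, fs k t * Q t y ∂(beliefPush T z u)) / obsProb T Q z u y
              - (∫ t, fs k t * Q t y ∂(beliefPush T z' u)) / obsProb T Q z' u y|
            = |obsProb T Q z' u y
              * ((∫ t, fs k t * Q t y ∂(beliefPush T z u)) / obsProb T Q z u y
                - (∫ t, fs k t * Q t y ∂(beliefPush T z' u)) / obsProb T Q z' u y)| := by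
          rw [abs_mul, abs_of_pos hpos']
        rw [e0, e1]
        refine (abs_add_le _ _).trans ?_
        rw [abs_mul]
        have hq1 : |(∫ t, fs k t * Q t y ∂(beliefPush T z u)) / obsProb T Q z u y| ≤ 1 := by
          rw [abs_div, abs_of_pos hpos, div_le_one hpos]
          exact habsN z hz k y
        have h5 := mul_le_of_le_one_right
          (abs_nonneg (obsProb T Q z' u y - obsProb T Q z u y)) hq1
        have habs2 : |obsProb T Q z' u y - obsProb T Q z u y|
            = |obsProb T Q z u y - obsProb T Q z' u y| := abs_sub_comm _ _
        linarith
      have hdk : ∀ k : ℕ,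
          |∫ t, fs k t ∂(bayes T Q z u y) - ∫ t, fs k t ∂(bayes T Q z' u y)| ≤ 2 := by
        intro k
        rw [hbayes z y k, hbayes z' y k]
        have u1 : |(∫ t, fs k t * Q t y ∂(beliefPush T z u)) / obsProb T Q z u y| ≤ 1 := by
          rw [abs_div, abs_of_pos hpos, div_le_one hpos]
          exact habsN z hz k y
        have u2 : |(∫ t, fs k t * Q t y ∂(beliefPush T z' u)) / obsProb T Q z' u y| ≤ 1 := by
          rw [abs_div, abs_of_pos hpos', div_le_one hpos']
          exact habsN z' hz' k y
        calc |(∫ t, fs k t * Q t y ∂(beliefPush T z u)) / obsProb T Q z u y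
              - (∫ t, fs k t * Q t y ∂(beliefPush T z' u)) / obsProb T Q z' u y|
            ≤ |(∫ t, fs k t * Q t y ∂(beliefPush T z u)) / obsProb T Q z u y|
              + |(∫ t, fs k t * Q t y ∂(beliefPush T z' u)) / obsProb T Q z' u y| :=
            abs_sub _ _
          _ ≤ 1 + 1 := add_le_add u1 u2
          _ = 2 := by norm_num
      have hsumL : Summable fun k : ℕ => obsProb T Q z' u y * ((2:ℝ)⁻¹ ^ (k + 2)
          * |∫ t, fs k t ∂(bayes T Q z u y) - ∫ t, fs k t ∂(bayes T Q z' u y)|) := by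
        have := summ_aux (2 * obsProb T Q z' u y)
          (fun k => obsProb T Q z' u y
            * |∫ t, fs k t ∂(bayes T Q z u y) - ∫ t, fs k t ∂(bayes T Q z' u y)|)
          (fun k => mul_nonneg (hp'0 y) (abs_nonneg _))
          (fun k => by
            have h := mul_le_mul_of_nonneg_left (hdk k) (hp'0 y)
            linarith)
        exact this.congr fun k => by ring
      have hchain : obsProb T Q z' u y * rhoSeq fs (bayes T Q z u y) (bayes T Q z' u y)
          ≤ ∑' k : ℕ, (2:ℝ)⁻¹ ^ (k + 2)
            * (|(∫ t, fs k t * Q t y ∂(beliefPush T z u))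
                - ∫ t, fs k t * Q t y ∂(beliefPush T z' u)|
              + |obsProb T Q z u y - obsProb T Q z' u y|) := by
        have e : obsProb T Q z' u y * rhoSeq fs (bayes T Q z u y) (bayes T Q z' u y)
            = ∑' k : ℕ, obsProb T Q z' u y * ((2:ℝ)⁻¹ ^ (k + 2)
              * |∫ t, fs k t ∂(bayes T Q z u y) - ∫ t, fs k t ∂(bayes T Q z' u y)|) := by
          rw [show rhoSeq fs (bayes T Q z u y) (bayes T Q z' u y)
            = ∑' k : ℕ, (2:ℝ)⁻¹ ^ (k + 2)
              * |∫ t, fs k t ∂(bayes T Q z u y) - ∫ t, fs k t ∂(bayes T Q z' u y)| from rfl,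
            ← tsum_mul_left]
        rw [e]
        refine Summable.tsum_le_tsum (fun k => ?_) hsumL (hsummg y)
        calc obsProb T Q z' u y * ((2:ℝ)⁻¹ ^ (k + 2)
              * |∫ t, fs k t ∂(bayes T Q z u y) - ∫ t, fs k t ∂(bayes T Q z' u y)|)
            = (2:ℝ)⁻¹ ^ (k + 2) * (obsProb T Q z' u y
              * |∫ t, fs k t ∂(bayes T Q z u y) - ∫ t, fs k t ∂(bayes T Q z' u y)|) := by
              ring
          _ ≤ (2:ℝ)⁻¹ ^ (k + 2)
              * (|(∫ t, fs k t * Q t y ∂(beliefPush T z u))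
                  - ∫ t, fs k t * Q t y ∂(beliefPush T z' u)|
                + |obsProb T Q z u y - obsProb T Q z' u y|) :=
              mul_le_mul_of_nonneg_left (hkey k) (hw0 k)
      have h6 : 0 ≤ 2 * a * |obsProb T Q z u y - obsProb T Q z' u y| := by positivity
      calc |obsProb T Q z' u y * (f (bayes T Q z u y) - f (bayes T Q z' u y))|
          = obsProb T Q z' u y * |f (bayes T Q z u y) - f (bayes T Q z' u y)| := by
            rw [abs_mul, abs_of_pos hpos']
        _ ≤ obsProb T Q z' u y
            * (b * rhoSeq fs (bayes T Q z u y) (bayes T Q z' u y)) :=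
            mul_le_mul_of_nonneg_left (hflip _ _) hpos'.le
        _ = b * (obsProb T Q z' u y * rhoSeq fs (bayes T Q z u y) (bayes T Q z' u y)) := by
            ring
        _ ≤ b * ∑' k : ℕ, (2:ℝ)⁻¹ ^ (k + 2)
              * (|(∫ t, fs k t * Q t y ∂(beliefPush T z u))
                  - ∫ t, fs k t * Q t y ∂(beliefPush T z' u)|
                + |obsProb T Q z u y - obsProb T Q z' u y|) :=
            mul_le_mul_of_nonneg_left hchain hb0
        _ ≤ _ := le_add_of_nonneg_left h6
  have hT2 : |∑ y : Y, obsProb T Q z' u y * (f (bayes T Q z u y) - f (bayes T Q z' u y))|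
      ≤ 2 * a * ((1 + αX) * blDist (fun a b : X => dist a b) z z')
        + b * ((1 + αX) * blDist (fun a b : X => dist a b) z z') := by
    refine (Finset.abs_sum_le_sum_abs _ _).trans ?_
    refine le_trans (Finset.sum_le_sum fun y _ => perY y) ?_
    rw [Finset.sum_add_distrib]
    have hA : ∑ y : Y, 2 * a * |obsProb T Q z u y - obsProb T Q z' u y|
        ≤ 2 * a * ((1 + αX) * blDist (fun a b : X => dist a b) z z') := by
      rw [← Finset.mul_sum]
      exact mul_le_mul_of_nonneg_left hΔp (by linarith)
    have hB : ∑ y : Y, b * (∑' k : ℕ, (2:ℝ)⁻¹ ^ (k + 2)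
          * (|(∫ t, fs k t * Q t y ∂(beliefPush T z u))
              - ∫ t, fs k t * Q t y ∂(beliefPush T z' u)|
            + |obsProb T Q z u y - obsProb T Q z' u y|))
        ≤ b * ((1 + αX) * blDist (fun a b : X => dist a b) z z') := by
      rw [← Finset.mul_sum]
      refine mul_le_mul_of_nonneg_left ?_ hb0
      have hswap : ∑ y : Y, ∑' k : ℕ, (2:ℝ)⁻¹ ^ (k + 2)
            * (|(∫ t, fs k t * Q t y ∂(beliefPush T z u))
                - ∫ t, fs k t * Q t y ∂(beliefPush T z' u)|
              + |obsProb T Q z u y - obsProb T Q z' u y|)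
          = ∑' k : ℕ, ∑ y : Y, (2:ℝ)⁻¹ ^ (k + 2)
            * (|(∫ t, fs k t * Q t y ∂(beliefPush T z u))
                - ∫ t, fs k t * Q t y ∂(beliefPush T z' u)|
              + |obsProb T Q z u y - obsProb T Q z' u y|) :=
        (Summable.tsum_finsetSum fun y _ => hsummg y).symm
      rw [hswap]
      have hterm : ∀ k : ℕ, ∑ y : Y, (2:ℝ)⁻¹ ^ (k + 2)
            * (|(∫ t, fs k t * Q t y ∂(beliefPush T z u))
                - ∫ t, fs k t * Q t y ∂(beliefPush T z' u)|
              + |obsProb T Q z u y - obsProb T Q z' u y|)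
          ≤ (2:ℝ)⁻¹ ^ (k + 2)
            * (2 * ((1 + αX) * blDist (fun a b : X => dist a b) z z')) := by
        intro k
        rw [← Finset.mul_sum]
        refine mul_le_mul_of_nonneg_left ?_ (hw0 k)
        rw [Finset.sum_add_distrib]
        have h1 := sum_abs (fs k) (hfs_meas k) (hfs_bdd k)
        linarith
      have hsumL2 : Summable fun k : ℕ => ∑ y : Y, (2:ℝ)⁻¹ ^ (k + 2)
            * (|(∫ t, fs k t * Q t y ∂(beliefPush T z u))
                - ∫ t, fs k t * Q t y ∂(beliefPush T z' u)|
              + |obsProb T Q z u y - obsProb T Q z' u y|) :=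
        summable_sum fun y _ => hsummg y
      calc ∑' k : ℕ, ∑ y : Y, (2:ℝ)⁻¹ ^ (k + 2)
            * (|(∫ t, fs k t * Q t y ∂(beliefPush T z u))
                - ∫ t, fs k t * Q t y ∂(beliefPush T z' u)|
              + |obsProb T Q z u y - obsProb T Q z' u y|)
          ≤ ∑' k : ℕ, (2:ℝ)⁻¹ ^ (k + 2)
            * (2 * ((1 + αX) * blDist (fun a b : X => dist a b) z z')) :=
            Summable.tsum_le_tsum hterm hsumL2
              (summ_w.mul_right (2 * ((1 + αX) * blDist (fun a b : X => dist a b) z z')))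
        _ = (∑' k : ℕ, (2:ℝ)⁻¹ ^ (k + 2))
            * (2 * ((1 + αX) * blDist (fun a b : X => dist a b) z z')) := tsum_mul_right
        _ = (1 + αX) * blDist (fun a b : X => dist a b) z z' := by
            rw [tsum_w]; ring
    linarith
  calc |(∑ y : Y, (obsProb T Q z u y - obsProb T Q z' u y) * f (bayes T Q z u y))
        + ∑ y : Y, obsProb T Q z' u y * (f (bayes T Q z u y) - f (bayes T Q z' u y))|
      ≤ |∑ y : Y, (obsProb T Q z u y - obsProb T Q z' u y) * f (bayes T Q z u y)|
        + |∑ y : Y, obsProb T Q z' u y * (f (bayes T Q z u y) - f (bayes T Q z' u y))| :=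
      abs_add_le _ _
    _ ≤ (1 + αX) * blDist (fun a b : X => dist a b) z z'
        + (2 * a * ((1 + αX) * blDist (fun a b : X => dist a b) z z')
          + b * ((1 + αX) * blDist (fun a b : X => dist a b) z z')) := add_le_add hT1 hT2
    _ ≤ 3 * (1 + αX) * blDist (fun a b : X => dist a b) z z' := by
        nlinarith [mul_nonneg (by linarith : (0:ℝ) ≤ 1 + αX) hBL0,
          mul_nonneg (by linarith : (0:ℝ) ≤ 2 - 2 * a - b)
            (mul_nonneg (by linarith : (0:ℝ) ≤ 1 + αX) hBL0)]
end MainLemma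

end KaraAux

end KaraAux

theorem statement0 {m : ℕ} (Xs : Set (EuclideanSpace ℝ (Fin m))) (hXs : MeasurableSet Xs)
    {Y U : Type*} [Fintype Y] [Fintype U]
    (T : Xs → U → MeasureTheory.Measure Xs)
    (hT_meas : ∀ u : U, Measurable fun x : Xs => T x u)
    (hT_prob : ∀ (x : Xs) (u : U), MeasureTheory.IsProbabilityMeasure (T x u))
    (Q : Xs → Y → ℝ)
    (hQ_meas : ∀ y : Y, Measurable fun x : Xs => Q x y)
    (hQ_nonneg : ∀ (x : Xs) (y : Y), 0 ≤ Q x y)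
    (hQ_sum : ∀ x : Xs, ∑ y : Y, Q x y = 1)
    (αX : ℝ)
    (hT_lip : ∀ (x x' : Xs) (u : U), tvDist (T x u) (T x' u) ≤ αX * dist x x')
    (fs : ℕ → Xs → ℝ)
    (hfs_meas : ∀ k, Measurable (fs k))
    (hfs_bdd : ∀ (k : ℕ) (x : Xs), |fs k x| ≤ 1)
    (z z' : MeasureTheory.Measure Xs)
    (hz : MeasureTheory.IsProbabilityMeasure z)
    (hz' : MeasureTheory.IsProbabilityMeasure z')
    (u : U) :
    etaBLDist T Q (rhoSeq fs) z z' u ≤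
      3 * (1 + αX) * blDist (fun x x' : Xs => dist x x') z z' := by
  by_cases hα : 0 ≤ αX
  · exact KaraAux.kara_main T hT_meas hT_prob Q hQ_meas hQ_nonneg hQ_sum hα hT_lip fs
      hfs_meas hfs_bdd z z' hz hz' u
  · -- `αX < 0` forces `Xs` to be a subsingleton, so both sides vanish
    push_neg at hα
    haveI := hz; haveI := hz'
    have hsub : ∀ x x' : Xs, x = x' := by
      intro x x'
      by_contra hne
      have hd : 0 < dist x x' := dist_pos.2 hne
      have h1 : 0 ≤ tvDist (T x u) (T x' u) := KaraAux.tvDist_nonneg _ _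
      have h2 := hT_lip x x' u
      nlinarith
    have hzz : z = z' := by
      ext s hs
      rcases Set.eq_empty_or_nonempty s with rfl | ⟨x, hx⟩
      · simp
      · have huniv : s = Set.univ := Set.eq_univ_of_forall fun t => by rw [hsub t x]; exact hx
        rw [huniv, measure_univ, measure_univ]
    subst hzz
    have hL : etaBLDist T Q (rhoSeq fs) z z u ≤ 0 := by
      refine Real.sSup_le ?_ le_rfl
      rintro r ⟨f, -, rfl⟩
      simp
    have hR : blDist (fun x x' : Xs => dist x x') z z = 0 := by
      refine le_antisymm ?_ (KaraAux.blDist_nonneg _ _ _)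
      refine Real.sSup_le ?_ le_rfl
      rintro r ⟨f, -, -, rfl⟩
      simp
    rw [hR, mul_zero]
    exact hL
end

section
/- Let X be a Borel subset of ℝ^m, Y a finite set, U a finite set, T a transition kernel from X×U to X and Q an observation kernel from X to Y, and let η be the associated belief transition kernel. Assume that for some α_X < ∞ one has ‖T(·|x,u) − T(·|x',u)‖_TV ≤ α_X |x − x'| for all x, x' ∈ X and all u ∈ U, and let δ(Q) = inf_{x,x'∈X} Σ_{y∈Y} min(Q(y|x), Q(y|x')) be the Dobrushin coefficient of Q. Then for every z, z' ∈ P(X), every u ∈ U, and every sequence (f_m)_{m≥1} of measurable functions f_m : X → ℝ with ‖f_m‖_∞ ≤ 1, one has ρ_BL^ρ(η(·|z,u), η(·|z',u)) ≤ (3 − 2δ(Q))(1 + α_X) ρ_BL(z, z'), where ρ_BL on the right-hand side is the bounded-Lipschitz metric on P(X) induced by the Euclidean metric on X. -/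
open MeasureTheory

noncomputable section StatementAux
open ENNReal
set_option linter.unusedSectionVars false
variable {X Y U : Type*} [MeasurableSpace X] [Fintype Y]


theorem integrable_of_bdd {μ : Measure X} [IsFiniteMeasure μ]
    {g : X → ℝ} (hg : Measurable g) {C : ℝ} (h : ∀ x, |g x| ≤ C) : Integrable g μ :=
  (integrable_const C).mono' hg.aestronglyMeasurable
    (Filter.Eventually.of_forall fun x => by simpa using h x)

theorem abs_integral_le_prob {μ : Measure X}
    [IsProbabilityMeasure μ] {g : X → ℝ} {C : ℝ} (h : ∀ x, |g x| ≤ C) :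
    |∫ x, g x ∂μ| ≤ C := by
  have := norm_integral_le_of_norm_le_const (μ := μ) (f := g) (C := C)
    (Filter.Eventually.of_forall fun x => by simpa using h x)
  simpa using this

section bindlemmas
variable {m : X → Measure X}

theorem measurable_kernel_integral (hm : Measurable m)
    (hp : ∀ x, IsProbabilityMeasure (m x)) {g : X → ℝ} (hg : Measurable g)
    {C : ℝ} (hC : ∀ x, |g x| ≤ C) :
    Measurable fun x => ∫ x', g x' ∂(m x) := by
  have hpos : Measurable fun x => ∫⁻ x', ENNReal.ofReal (g x') ∂(m x) :=
    (Measure.measurable_lintegral hg.ennreal_ofReal).comp hm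
  have hneg : Measurable fun x => ∫⁻ x', ENNReal.ofReal (-g x') ∂(m x) :=
    (Measure.measurable_lintegral hg.neg.ennreal_ofReal).comp hm
  have heq : (fun x => ∫ x', g x' ∂(m x)) = fun x =>
      (∫⁻ x', ENNReal.ofReal (g x') ∂(m x)).toReal -
      (∫⁻ x', ENNReal.ofReal (-g x') ∂(m x)).toReal := by
    funext x
    have := hp x
    exact integral_eq_lintegral_pos_part_sub_lintegral_neg_part (integrable_of_bdd hg hC)
  rw [heq]; exact hpos.ennreal_toReal.sub hneg.ennreal_toReal

theorem lintegral_bdd {μ : Measure X} [IsProbabilityMeasure μ] {g : X → ℝ} {C : ℝ}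
    (h : ∀ x, g x ≤ C) : ∫⁻ x, ENNReal.ofReal (g x) ∂μ ≤ ENNReal.ofReal C := by
  calc ∫⁻ x, ENNReal.ofReal (g x) ∂μ ≤ ∫⁻ _, ENNReal.ofReal C ∂μ :=
        lintegral_mono fun x => ENNReal.ofReal_le_ofReal (h x)
    _ = ENNReal.ofReal C := by simp [measure_univ]

theorem integral_bind_real (hm : Measurable m)
    (hp : ∀ x, IsProbabilityMeasure (m x)) {z : Measure X} [IsProbabilityMeasure z]
    {g : X → ℝ} (hg : Measurable g) {C : ℝ} (hC : ∀ x, |g x| ≤ C) :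
    ∫ x, g x ∂(z.bind m) = ∫ x, (∫ x', g x' ∂(m x)) ∂z := by
  have hb : IsProbabilityMeasure (z.bind m) := by
    constructor
    rw [Measure.bind_apply MeasurableSet.univ hm.aemeasurable]
    simp [measure_univ]
  set Hp : X → ℝ≥0∞ := fun x => ∫⁻ x', ENNReal.ofReal (g x') ∂(m x) with hHp
  set Hn : X → ℝ≥0∞ := fun x => ∫⁻ x', ENNReal.ofReal (-g x') ∂(m x) with hHn
  have hmp : Measurable Hp := (Measure.measurable_lintegral hg.ennreal_ofReal).comp hm
  have hmn : Measurable Hn := (Measure.measurable_lintegral hg.neg.ennreal_ofReal).comp hm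
  have hbp : ∀ x, Hp x ≤ ENNReal.ofReal C := fun x => by
    have := hp x
    exact lintegral_bdd fun x' => (abs_le.1 (hC x')).2
  have hbn : ∀ x, Hn x ≤ ENNReal.ofReal C := fun x => by
    have := hp x
    exact lintegral_bdd fun x' => by simpa using neg_le_neg (abs_le.1 (hC x')).1
  have hltp : ∀ x, Hp x < ⊤ := fun x => (hbp x).trans_lt ENNReal.ofReal_lt_top
  have hltn : ∀ x, Hn x < ⊤ := fun x => (hbn x).trans_lt ENNReal.ofReal_lt_top
  have h0C : 0 ≤ C := le_trans (abs_nonneg _) (hC (Classical.choice ?_))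
  swap
  · by_contra he
    have hie : IsEmpty X := not_nonempty_iff.1 (fun ⟨x⟩ => he ⟨x⟩)
    have h1 : z Set.univ = 1 := measure_univ
    simp [Set.univ_eq_empty_iff.2 hie] at h1
  have hintb : Integrable g (z.bind m) := integrable_of_bdd hg hC
  rw [integral_eq_lintegral_pos_part_sub_lintegral_neg_part hintb,
    Measure.lintegral_bind hm.aemeasurable hg.ennreal_ofReal.aemeasurable, Measure.lintegral_bind (f := fun x => ENNReal.ofReal (-g x)) hm.aemeasurable hg.neg.ennreal_ofReal.aemeasurable]
  have heq : ∀ x, (∫ x', g x' ∂(m x)) = (Hp x).toReal - (Hn x).toReal := fun x => by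
    have := hp x
    exact integral_eq_lintegral_pos_part_sub_lintegral_neg_part (integrable_of_bdd hg hC)
  have hip : Integrable (fun x => (Hp x).toReal) z := integrable_of_bdd hmp.ennreal_toReal
    (C := C) fun x => by
      rw [abs_of_nonneg ENNReal.toReal_nonneg]
      calc (Hp x).toReal ≤ (ENNReal.ofReal C).toReal :=
            ENNReal.toReal_mono ENNReal.ofReal_ne_top (hbp x)
        _ = C := ENNReal.toReal_ofReal h0C
  have hin : Integrable (fun x => (Hn x).toReal) z := integrable_of_bdd hmn.ennreal_toReal
    (C := C) fun x => by
      rw [abs_of_nonneg ENNReal.toReal_nonneg]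
      calc (Hn x).toReal ≤ (ENNReal.ofReal C).toReal :=
            ENNReal.toReal_mono ENNReal.ofReal_ne_top (hbn x)
        _ = C := ENNReal.toReal_ofReal h0C
  calc (∫⁻ x, Hp x ∂z).toReal - (∫⁻ x, Hn x ∂z).toReal
      = (∫ x, (Hp x).toReal ∂z) - ∫ x, (Hn x).toReal ∂z := by
        rw [integral_toReal hmp.aemeasurable (Filter.Eventually.of_forall hltp),
          integral_toReal hmn.aemeasurable (Filter.Eventually.of_forall hltn)]
    _ = ∫ x, ((Hp x).toReal - (Hn x).toReal) ∂z := (integral_sub hip hin).symm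
    _ = ∫ x, (∫ x', g x' ∂(m x)) ∂z := by simp_rw [heq]

end bindlemmas

section tvbl
variable {S : Type*} [MeasurableSpace S] {μ ν : Measure S}
  [IsProbabilityMeasure μ] [IsProbabilityMeasure ν]

theorem tv_bddAbove : BddAbove {r | ∃ f : S → ℝ, Measurable f ∧ (∀ x, |f x| ≤ 1) ∧
    r = |∫ x, f x ∂μ - ∫ x, f x ∂ν|} := by
  refine ⟨2, fun r hr => ?_⟩
  obtain ⟨f, hf, hb, rfl⟩ := hr
  calc |∫ x, f x ∂μ - ∫ x, f x ∂ν| ≤ |∫ x, f x ∂μ| + |∫ x, f x ∂ν| := abs_sub _ _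
    _ ≤ 1 + 1 := add_le_add (abs_integral_le_prob hb) (abs_integral_le_prob hb)
    _ = 2 := by norm_num

theorem tv_nonneg : 0 ≤ tvDist μ ν := by
  refine le_csSup tv_bddAbove ⟨0, measurable_const, fun x => by norm_num, by simp⟩

theorem abs_integral_diff_le_tvDist {g : S → ℝ} (hg : Measurable g) (hb : ∀ x, |g x| ≤ 1) :
    |∫ x, g x ∂μ - ∫ x, g x ∂ν| ≤ tvDist μ ν :=
  le_csSup tv_bddAbove ⟨g, hg, hb, rfl⟩

theorem blNormLE_bound {d : S → S → ℝ} {f : S → ℝ} {c : ℝ} (h : blNormLE d f c) (x : S) :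
    |f x| ≤ c := by
  obtain ⟨a, b, ha, hb, hab, hfa, -⟩ := h
  exact (hfa x).trans (by linarith)

theorem bl_bddAbove {d : S → S → ℝ} : BddAbove {r | ∃ f : S → ℝ, Measurable f ∧
    blNormLE d f 1 ∧ r = |∫ x, f x ∂μ - ∫ x, f x ∂ν|} := by
  refine ⟨2, fun r hr => ?_⟩
  obtain ⟨f, hf, hn, rfl⟩ := hr
  have hb : ∀ x, |f x| ≤ 1 := blNormLE_bound hn
  calc |∫ x, f x ∂μ - ∫ x, f x ∂ν| ≤ |∫ x, f x ∂μ| + |∫ x, f x ∂ν| := abs_sub _ _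
    _ ≤ 1 + 1 := add_le_add (abs_integral_le_prob hb) (abs_integral_le_prob hb)
    _ = 2 := by norm_num

theorem bl_nonneg {d : S → S → ℝ} : 0 ≤ blDist d μ ν :=
  le_csSup bl_bddAbove ⟨0, measurable_const,
    ⟨0, 0, le_refl _, le_refl _, by norm_num, fun x => by norm_num, fun x y => by simp⟩, by simp⟩

theorem abs_integral_diff_le_mul_blDist {d : S → S → ℝ} {h : S → ℝ} (hm : Measurable h)
    {c : ℝ} (hc : 0 < c) (hn : blNormLE d h c) :
    |∫ x, h x ∂μ - ∫ x, h x ∂ν| ≤ c * blDist d μ ν := by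
  obtain ⟨a, b, ha, hb, hab, hfa, hlip⟩ := hn
  have key : |∫ x, c⁻¹ * h x ∂μ - ∫ x, c⁻¹ * h x ∂ν| ≤ blDist d μ ν := by
    refine le_csSup bl_bddAbove ⟨fun x => c⁻¹ * h x, measurable_const.mul hm, ?_, rfl⟩
    refine ⟨c⁻¹ * a, c⁻¹ * b, by positivity, by positivity, ?_, fun x => ?_, fun x y => ?_⟩
    · rw [← mul_add]
      calc c⁻¹ * (a + b) ≤ c⁻¹ * c := mul_le_mul_of_nonneg_left hab (by positivity)
        _ = 1 := inv_mul_cancel₀ hc.ne'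
    · rw [abs_mul, abs_of_pos (by positivity)]
      exact mul_le_mul_of_nonneg_left (hfa x) (by positivity)
    · rw [← mul_sub, abs_mul, abs_of_pos (by positivity), mul_assoc]
      exact mul_le_mul_of_nonneg_left (hlip x y) (by positivity)
  rw [integral_const_mul, integral_const_mul, ← mul_sub, abs_mul,
    abs_of_pos (by positivity : (0:ℝ) < c⁻¹)] at key
  calc |∫ x, h x ∂μ - ∫ x, h x ∂ν| = c * (c⁻¹ * |∫ x, h x ∂μ - ∫ x, h x ∂ν|) := by
        field_simp
    _ ≤ c * blDist d μ ν := mul_le_mul_of_nonneg_left key hc.le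

end tvbl

section kernels
variable {T : X → U → Measure X} {Q : X → Y → ℝ}

theorem isProb_beliefPush (hT_meas : ∀ u : U, Measurable fun x => T x u)
    (hT_prob : ∀ x u, IsProbabilityMeasure (T x u)) {z : Measure X} [IsProbabilityMeasure z]
    (u : U) : IsProbabilityMeasure (beliefPush T z u) := by
  constructor
  rw [beliefPush, Measure.bind_apply MeasurableSet.univ (hT_meas u).aemeasurable]
  simp [(hT_prob _ u).measure_univ]

theorem push_diff_le (hT_meas : ∀ u : U, Measurable fun x => T x u)
    (hT_prob : ∀ x u, IsProbabilityMeasure (T x u))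
    {d : X → X → ℝ} {α : ℝ} (hα : 0 ≤ α)
    (hT_lip : ∀ x x' u, tvDist (T x u) (T x' u) ≤ α * d x x')
    {z z' : Measure X} [IsProbabilityMeasure z] [IsProbabilityMeasure z'] (u : U)
    {g : X → ℝ} (hg : Measurable g) (hgb : ∀ x, |g x| ≤ 1) :
    |∫ x, g x ∂(beliefPush T z u) - ∫ x, g x ∂(beliefPush T z' u)| ≤
      (1 + α) * blDist d z z' := by
  have h1 : ∫ x, g x ∂(beliefPush T z u) = ∫ x, (∫ x', g x' ∂(T x u)) ∂z :=
    integral_bind_real (hT_meas u) (fun x => hT_prob x u) hg hgb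
  have h2 : ∫ x, g x ∂(beliefPush T z' u) = ∫ x, (∫ x', g x' ∂(T x u)) ∂z' :=
    integral_bind_real (hT_meas u) (fun x => hT_prob x u) hg hgb
  rw [h1, h2]
  have hmh : Measurable fun x => ∫ x', g x' ∂(T x u) :=
    measurable_kernel_integral (hT_meas u) (fun x => hT_prob x u) hg hgb
  refine abs_integral_diff_le_mul_blDist hmh (by linarith) ⟨1, α, zero_le_one, hα, le_refl _,
    fun x => ?_, fun x x' => ?_⟩
  · have := hT_prob x u
    exact abs_integral_le_prob hgb
  · have := hT_prob x u
    have := hT_prob x' u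
    exact (abs_integral_diff_le_tvDist hg hgb).trans (hT_lip x x' u)

theorem sum_abs_push_diff_le (hT_meas : ∀ u : U, Measurable fun x => T x u)
    (hT_prob : ∀ x u, IsProbabilityMeasure (T x u))
    {d : X → X → ℝ} {α : ℝ} (hα : 0 ≤ α)
    (hT_lip : ∀ x x' u, tvDist (T x u) (T x' u) ≤ α * d x x')
    {z z' : Measure X} [IsProbabilityMeasure z] [IsProbabilityMeasure z'] (u : U)
    {g : Y → X → ℝ} (hgm : ∀ y, Measurable (g y)) (hgb : ∀ x, ∑ y : Y, |g y x| ≤ 1) :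
    ∑ y : Y, |∫ x, g y x ∂(beliefPush T z u) - ∫ x, g y x ∂(beliefPush T z' u)| ≤
      (1 + α) * blDist d z z' := by
  haveI hμp : IsProbabilityMeasure (beliefPush T z u) :=
    isProb_beliefPush hT_meas hT_prob u
  haveI hνp : IsProbabilityMeasure (beliefPush T z' u) :=
    isProb_beliefPush hT_meas hT_prob u
  classical
  have hg1 : ∀ y x, |g y x| ≤ 1 := fun y x =>
    le_trans (Finset.single_le_sum (fun y' _ => abs_nonneg (g y' x)) (Finset.mem_univ y)) (hgb x)
  set s : Y → ℝ := fun y =>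
    if 0 ≤ ∫ x, g y x ∂(beliefPush T z u) - ∫ x, g y x ∂(beliefPush T z' u) then 1 else -1
    with hs
  have hsabs : ∀ y, |s y| = 1 := fun y => by
    rw [hs]; dsimp only; split_ifs <;> simp
  have habs : ∀ y, s y * (∫ x, g y x ∂(beliefPush T z u) - ∫ x, g y x ∂(beliefPush T z' u)) =
      |∫ x, g y x ∂(beliefPush T z u) - ∫ x, g y x ∂(beliefPush T z' u)| := fun y => by
    rw [hs]; dsimp only; split_ifs with h
    · rw [one_mul, abs_of_nonneg h]
    · rw [neg_one_mul, abs_of_neg (not_le.1 h)]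
  set G : X → ℝ := fun x => ∑ y : Y, s y * g y x with hG
  have hGm : Measurable G := Finset.measurable_sum _ fun y _ => measurable_const.mul (hgm y)
  have hGb : ∀ x, |G x| ≤ 1 := fun x => by
    calc |G x| ≤ ∑ y : Y, |s y * g y x| := Finset.abs_sum_le_sum_abs _ _
      _ = ∑ y : Y, |g y x| := Finset.sum_congr rfl fun y _ => by
            rw [abs_mul, hsabs y, one_mul]
      _ ≤ 1 := hgb x
  have hGint : ∀ (μ : Measure X) [IsProbabilityMeasure μ],
      ∫ x, G x ∂μ = ∑ y : Y, s y * ∫ x, g y x ∂μ := by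
    intro μ _
    rw [hG]
    rw [integral_finset_sum _ fun y _ => (integrable_of_bdd (hgm y) (hg1 y)).const_mul (s y)]
    exact Finset.sum_congr rfl fun y _ => integral_const_mul _ _
  calc ∑ y : Y, |∫ x, g y x ∂(beliefPush T z u) - ∫ x, g y x ∂(beliefPush T z' u)|
      = ∑ y : Y, s y * (∫ x, g y x ∂(beliefPush T z u) - ∫ x, g y x ∂(beliefPush T z' u)) :=
        (Finset.sum_congr rfl fun y _ => (habs y)).symm
    _ = (∑ y : Y, s y * ∫ x, g y x ∂(beliefPush T z u)) -
        ∑ y : Y, s y * ∫ x, g y x ∂(beliefPush T z' u) := by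
          rw [← Finset.sum_sub_distrib]
          exact Finset.sum_congr rfl fun y _ => by ring
    _ = ∫ x, G x ∂(beliefPush T z u) - ∫ x, G x ∂(beliefPush T z' u) := by
          rw [hGint, hGint]
    _ ≤ |∫ x, G x ∂(beliefPush T z u) - ∫ x, G x ∂(beliefPush T z' u)| := le_abs_self _
    _ ≤ (1 + α) * blDist d z z' := push_diff_le hT_meas hT_prob hα hT_lip u hGm hGb

theorem integral_bayes (hQ_meas : ∀ y : Y, Measurable fun x => Q x y)
    (hQ_nonneg : ∀ x y, 0 ≤ Q x y) {z : Measure X} (u : U) (y : Y)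
    (hpos : 0 < obsProb T Q z u y) (g : X → ℝ) :
    ∫ x, g x ∂(bayes T Q z u y) =
      (obsProb T Q z u y)⁻¹ * ∫ x, Q x y * g x ∂(beliefPush T z u) := by
  rw [bayes, integral_smul_measure]
  rw [show (fun x => ENNReal.ofReal (Q x y)) = (fun x => ((Q x y).toNNReal : ℝ≥0∞)) from rfl]
  rw [integral_withDensity_eq_integral_smul (hQ_meas y).real_toNNReal]
  rw [ENNReal.toReal_inv, ENNReal.toReal_ofReal hpos.le, smul_eq_mul]
  congr 1
  refine integral_congr_ae (Filter.Eventually.of_forall fun x => ?_)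
  show (Q x y).toNNReal • g x = Q x y * g x
  rw [NNReal.smul_def, Real.coe_toNNReal _ (hQ_nonneg x y), smul_eq_mul]

end kernels
end StatementAux

theorem statement1 {m : ℕ} (Xs : Set (EuclideanSpace ℝ (Fin m))) (hXs : MeasurableSet Xs)
    {Y U : Type*} [Fintype Y] [Fintype U]
    (T : Xs → U → MeasureTheory.Measure Xs)
    (hT_meas : ∀ u : U, Measurable fun x : Xs => T x u)
    (hT_prob : ∀ (x : Xs) (u : U), MeasureTheory.IsProbabilityMeasure (T x u))
    (Q : Xs → Y → ℝ)
    (hQ_meas : ∀ y : Y, Measurable fun x : Xs => Q x y)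
    (hQ_nonneg : ∀ (x : Xs) (y : Y), 0 ≤ Q x y)
    (hQ_sum : ∀ x : Xs, ∑ y : Y, Q x y = 1)
    (αX : ℝ)
    (hT_lip : ∀ (x x' : Xs) (u : U), tvDist (T x u) (T x' u) ≤ αX * dist x x')
    (fs : ℕ → Xs → ℝ)
    (hfs_meas : ∀ k, Measurable (fs k))
    (hfs_bdd : ∀ (k : ℕ) (x : Xs), |fs k x| ≤ 1)
    (z z' : MeasureTheory.Measure Xs)
    (hz : MeasureTheory.IsProbabilityMeasure z)
    (hz' : MeasureTheory.IsProbabilityMeasure z')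
    (u : U) :
    etaBLDist T Q (rhoSeq fs) z z' u ≤
      (3 - 2 * dobrushinObs Q) * (1 + αX) * blDist (fun x x' : Xs => dist x x') z z' := by
  classical
  haveI := hz; haveI := hz'
  have hDnn : 0 ≤ blDist (fun x x' : Xs => dist x x') z z' := bl_nonneg
  rcases subsingleton_or_nontrivial Xs with hsub | hnt
  · -- degenerate case: Xs has at most one point
    haveI := hsub
    have hzz : z = z' := by
      ext s hs
      rcases Set.eq_empty_or_nonempty s with rfl | ⟨x0, hx0⟩
      · simp
      · have hsu : s = Set.univ := Set.eq_univ_of_forall fun x => by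
          rwa [Subsingleton.elim x x0]
        rw [hsu, measure_univ, measure_univ]
    have hL : etaBLDist T Q (rhoSeq fs) z z' u ≤ 0 := by
      refine Real.sSup_le ?_ le_rfl
      rintro r ⟨f, -, rfl⟩
      rw [hzz]; simp
    have hDz : blDist (fun x x' : Xs => dist x x') z z' ≤ 0 := by
      refine Real.sSup_le ?_ le_rfl
      rintro r ⟨f, -, -, rfl⟩
      rw [hzz]; simp
    have hD0 : blDist (fun x x' : Xs => dist x x') z z' = 0 := le_antisymm hDz hDnn
    rw [hD0, mul_zero]
    exact hL
  · haveI := hnt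
    obtain ⟨x₀, x₁, hne⟩ := exists_pair_ne Xs
    have hα : 0 ≤ αX := by
      haveI := hT_prob x₀ u; haveI := hT_prob x₁ u
      have h1 : 0 < dist x₀ x₁ := dist_pos.2 hne
      have h2 : (0:ℝ) ≤ tvDist (T x₀ u) (T x₁ u) := tv_nonneg
      have h3 := hT_lip x₀ x₁ u
      nlinarith
    have hδ1 : dobrushinObs Q ≤ 1 := by
      have hbdd : BddBelow (Set.range fun p : Xs × Xs => ∑ y : Y, min (Q p.1 y) (Q p.2 y)) := by
        refine ⟨0, ?_⟩
        rintro r ⟨p, rfl⟩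
        exact Finset.sum_nonneg fun y _ => le_min (hQ_nonneg p.1 y) (hQ_nonneg p.2 y)
      calc dobrushinObs Q ≤ ∑ y : Y, min (Q x₀ y) (Q x₀ y) := ciInf_le hbdd (x₀, x₀)
        _ = 1 := by simp only [min_self]; exact hQ_sum x₀
    set D := blDist (fun x x' : Xs => dist x x') z z' with hDdef
    have hβnn : 0 ≤ (1 + αX) * D := mul_nonneg (by linarith) hDnn
    have hfinal : (1 + αX) * D ≤ (3 - 2 * dobrushinObs Q) * (1 + αX) * D := by
      nlinarith [mul_nonneg (show (0:ℝ) ≤ 2 - 2 * dobrushinObs Q by linarith) hβnn]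
    refine Real.sSup_le ?_ (le_trans hβnn hfinal)
    rintro r ⟨f, hfn, rfl⟩
    refine le_trans ?_ hfinal
    obtain ⟨a, b, ha, hb, hab, hfa, hflip⟩ := hfn
    haveI hμp : IsProbabilityMeasure (beliefPush T z u) :=
      isProb_beliefPush hT_meas (fun x uu => hT_prob x uu) u
    haveI hνp : IsProbabilityMeasure (beliefPush T z' u) :=
      isProb_beliefPush hT_meas (fun x uu => hT_prob x uu) u
    have hQ1 : ∀ (x : Xs) (y : Y), Q x y ≤ 1 := fun x y =>
      (Finset.single_le_sum (fun y' _ => hQ_nonneg x y') (Finset.mem_univ y)).trans (hQ_sum x).le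
    have hQabs : ∀ (x : Xs) (y : Y), |Q x y| ≤ 1 := fun x y =>
      abs_le.2 ⟨by linarith [hQ_nonneg x y], hQ1 x y⟩
    have hPnn : ∀ y : Y, 0 ≤ obsProb T Q z u y := fun y =>
      integral_nonneg fun x => hQ_nonneg x y
    have hP'nn : ∀ y : Y, 0 ≤ obsProb T Q z' u y := fun y =>
      integral_nonneg fun x => hQ_nonneg x y
    have hP'le1 : ∀ y : Y, obsProb T Q z' u y ≤ 1 := fun y =>
      (le_abs_self _).trans (abs_integral_le_prob fun x => hQabs x y)
    have S1 : ∑ y : Y, |obsProb T Q z u y - obsProb T Q z' u y| ≤ (1 + αX) * D := by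
      refine sum_abs_push_diff_le (g := fun y x => Q x y) hT_meas hT_prob hα hT_lip u
        (fun y => hQ_meas y) (fun x => ?_)
      calc ∑ y : Y, |Q x y| = ∑ y : Y, Q x y :=
            Finset.sum_congr rfl fun y _ => abs_of_nonneg (hQ_nonneg x y)
        _ ≤ 1 := (hQ_sum x).le
    have SA : ∀ k : ℕ, ∑ y : Y, |(∫ x, Q x y * fs k x ∂(beliefPush T z u)) -
        ∫ x, Q x y * fs k x ∂(beliefPush T z' u)| ≤ (1 + αX) * D := by
      intro k
      refine sum_abs_push_diff_le (g := fun y x => Q x y * fs k x) hT_meas hT_prob hα hT_lip u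
        (fun y => (hQ_meas y).mul (hfs_meas k)) (fun x => ?_)
      calc ∑ y : Y, |Q x y * fs k x| ≤ ∑ y : Y, Q x y :=
            Finset.sum_le_sum fun y _ => by
              rw [abs_mul, abs_of_nonneg (hQ_nonneg x y)]
              exact mul_le_of_le_one_right (hQ_nonneg x y) (hfs_bdd k x)
        _ ≤ 1 := (hQ_sum x).le
    have hAbs : ∀ (m : MeasureTheory.Measure Xs) (_ : IsProbabilityMeasure m) (k : ℕ) (y : Y),
        |∫ x, Q x y * fs k x ∂m| ≤ ∫ x, Q x y ∂m := by
      intro m hm k y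
      haveI := hm
      have hint1 : Integrable (fun x => Q x y * fs k x) m :=
        integrable_of_bdd ((hQ_meas y).mul (hfs_meas k)) (C := 1) fun x => by
          rw [abs_mul]
          calc |Q x y| * |fs k x| ≤ 1 * 1 :=
                mul_le_mul (hQabs x y) (hfs_bdd k x) (abs_nonneg _) zero_le_one
            _ = 1 := one_mul 1
      have hint2 : Integrable (fun x => Q x y) m :=
        integrable_of_bdd (hQ_meas y) fun x => hQabs x y
      calc |∫ x, Q x y * fs k x ∂m| ≤ ∫ x, |Q x y| * |fs k x| ∂m := by
            simpa [abs_mul] using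
              norm_integral_le_integral_norm (μ := m) (fun x => Q x y * fs k x)
        _ ≤ ∫ x, Q x y ∂m := by
            refine integral_mono ?_ hint2 fun x => ?_
            · have := hint1.abs
              simpa [abs_mul] using this
            · rw [abs_of_nonneg (hQ_nonneg x y)]
              exact mul_le_of_le_one_right (hQ_nonneg x y) (hfs_bdd k x)
    have hIb : ∀ (zz : MeasureTheory.Measure Xs) (_ : IsProbabilityMeasure zz) (k : ℕ) (y : Y),
        0 < obsProb T Q zz u y → |∫ x, fs k x ∂(bayes T Q zz u y)| ≤ 1 := by
      intro zz hzz k y hpos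
      haveI := hzz
      haveI : IsProbabilityMeasure (beliefPush T zz u) :=
        isProb_beliefPush hT_meas (fun x uu => hT_prob x uu) u
      rw [integral_bayes hQ_meas hQ_nonneg u y hpos (fs k), abs_mul,
        abs_of_pos (inv_pos.2 hpos)]
      calc (obsProb T Q zz u y)⁻¹ * |∫ x, Q x y * fs k x ∂(beliefPush T zz u)|
          ≤ (obsProb T Q zz u y)⁻¹ * obsProb T Q zz u y :=
            mul_le_mul_of_nonneg_left (hAbs _ this k y) (by positivity)
        _ = 1 := inv_mul_cancel₀ hpos.ne'
    have hwsummable : Summable (fun k : ℕ => (2:ℝ)⁻¹ ^ (k + 2)) := by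
      have h := (summable_geometric_of_lt_one (r := (2:ℝ)⁻¹) (by norm_num)
        (by norm_num)).mul_right ((2:ℝ)⁻¹ ^ 2)
      simpa [pow_add] using h
    have hwsum : ∑' k : ℕ, (2:ℝ)⁻¹ ^ (k + 2) = 2⁻¹ := by
      calc ∑' k : ℕ, (2:ℝ)⁻¹ ^ (k + 2) = ∑' k : ℕ, (2:ℝ)⁻¹ ^ k * (2:ℝ)⁻¹ ^ 2 :=
            tsum_congr fun k => pow_add _ k 2
        _ = (∑' k : ℕ, (2:ℝ)⁻¹ ^ k) * (2:ℝ)⁻¹ ^ 2 := tsum_mul_right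
        _ = (1 - 2⁻¹)⁻¹ * (2:ℝ)⁻¹ ^ 2 := by
            rw [tsum_geometric_of_lt_one (by norm_num) (by norm_num)]
        _ = 2⁻¹ := by norm_num
    set c : ℕ → Y → ℝ := fun k y =>
      if 0 < obsProb T Q z u y ∧ 0 < obsProb T Q z' u y then
        obsProb T Q z' u y * ((2:ℝ)⁻¹ ^ (k + 2) *
          |(∫ x, fs k x ∂(bayes T Q z u y)) - ∫ x, fs k x ∂(bayes T Q z' u y)|)
      else 0 with hcdef
    have hcnn : ∀ k y, 0 ≤ c k y := by
      intro k y
      simp only [hcdef]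
      split_ifs with h
      · exact mul_nonneg (hP'nn y) (mul_nonneg (by positivity) (abs_nonneg _))
      · exact le_rfl
    have hcle : ∀ k y, c k y ≤ 2 * (2:ℝ)⁻¹ ^ (k + 2) := by
      intro k y
      simp only [hcdef]
      split_ifs with h
      · have hI2 : |(∫ x, fs k x ∂(bayes T Q z u y)) - ∫ x, fs k x ∂(bayes T Q z' u y)| ≤ 2 := by
          have h1 := hIb z hz k y h.1
          have h2 := hIb z' hz' k y h.2
          calc |(∫ x, fs k x ∂(bayes T Q z u y)) - ∫ x, fs k x ∂(bayes T Q z' u y)|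
              ≤ |∫ x, fs k x ∂(bayes T Q z u y)| + |∫ x, fs k x ∂(bayes T Q z' u y)| :=
                abs_sub _ _
            _ ≤ 2 := by linarith
        calc obsProb T Q z' u y * ((2:ℝ)⁻¹ ^ (k + 2) *
              |(∫ x, fs k x ∂(bayes T Q z u y)) - ∫ x, fs k x ∂(bayes T Q z' u y)|)
            ≤ 1 * ((2:ℝ)⁻¹ ^ (k + 2) * 2) :=
              mul_le_mul (hP'le1 y) (mul_le_mul_of_nonneg_left hI2 (by positivity))
                (mul_nonneg (by positivity) (abs_nonneg _)) zero_le_one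
          _ = 2 * (2:ℝ)⁻¹ ^ (k + 2) := by ring
      · positivity
    have hcsum : ∀ y, Summable fun k => c k y := fun y =>
      Summable.of_nonneg_of_le (fun k => hcnn k y) (fun k => hcle k y) (hwsummable.mul_left 2)
    have hkey : ∀ (k : ℕ) (y : Y), c k y ≤ (2:ℝ)⁻¹ ^ (k + 2) *
        (|obsProb T Q z u y - obsProb T Q z' u y| +
         |(∫ x, Q x y * fs k x ∂(beliefPush T z u)) -
          ∫ x, Q x y * fs k x ∂(beliefPush T z' u)|) := by
      intro k y
      simp only [hcdef]
      split_ifs with h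
      · obtain ⟨hP, hP'⟩ := h
        rw [integral_bayes hQ_meas hQ_nonneg u y hP (fs k),
          integral_bayes hQ_meas hQ_nonneg u y hP' (fs k)]
        set p := obsProb T Q z u y with hpdef
        set p' := obsProb T Q z' u y with hp'def
        set A := ∫ x, Q x y * fs k x ∂(beliefPush T z u) with hAdef
        set A' := ∫ x, Q x y * fs k x ∂(beliefPush T z' u) with hA'def
        have hAp : |A| ≤ p := hAbs _ hμp k y
        have hfrac : |p⁻¹ * A| ≤ 1 := by
          rw [abs_mul, abs_of_pos (inv_pos.2 hP)]
          calc p⁻¹ * |A| ≤ p⁻¹ * p := mul_le_mul_of_nonneg_left hAp (by positivity)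
            _ = 1 := inv_mul_cancel₀ hP.ne'
        have hiden : p' * (p⁻¹ * A) - p' * (p'⁻¹ * A') = (p⁻¹ * A) * (p' - p) + (A - A') := by
          field_simp
          ring
        have h0 : p' * |p⁻¹ * A - p'⁻¹ * A'| = |p' * (p⁻¹ * A) - p' * (p'⁻¹ * A')| := by
          rw [← mul_sub, abs_mul, abs_of_pos hP']
        have hmain : p' * |p⁻¹ * A - p'⁻¹ * A'| ≤ |p - p'| + |A - A'| := by
          rw [h0, hiden]
          calc |(p⁻¹ * A) * (p' - p) + (A - A')| ≤ |(p⁻¹ * A) * (p' - p)| + |A - A'| :=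
                abs_add_le _ _
            _ ≤ |p - p'| + |A - A'| := by
                rw [abs_mul, abs_sub_comm p' p]
                have hh := mul_le_mul_of_nonneg_right hfrac (abs_nonneg (p - p'))
                nlinarith [abs_nonneg (p - p')]
        calc p' * ((2:ℝ)⁻¹ ^ (k + 2) * |p⁻¹ * A - p'⁻¹ * A'|)
            = (2:ℝ)⁻¹ ^ (k + 2) * (p' * |p⁻¹ * A - p'⁻¹ * A'|) := by ring
          _ ≤ (2:ℝ)⁻¹ ^ (k + 2) * (|p - p'| + |A - A'|) :=
              mul_le_mul_of_nonneg_left hmain (by positivity)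
      · positivity
    have hWc : ∀ y : Y, (if 0 < obsProb T Q z u y ∧ 0 < obsProb T Q z' u y then
        obsProb T Q z' u y * rhoSeq fs (bayes T Q z u y) (bayes T Q z' u y) else 0) =
        ∑' k : ℕ, c k y := by
      intro y
      by_cases h : 0 < obsProb T Q z u y ∧ 0 < obsProb T Q z' u y
      · rw [if_pos h]
        have hck : ∀ k : ℕ, c k y = obsProb T Q z' u y * ((2:ℝ)⁻¹ ^ (k + 2) *
            |(∫ x, fs k x ∂(bayes T Q z u y)) - ∫ x, fs k x ∂(bayes T Q z' u y)|) := fun k => by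
          simp only [hcdef]; rw [if_pos h]
        rw [tsum_congr hck, tsum_mul_left, rhoSeq]
      · rw [if_neg h]
        have hck : ∀ k : ℕ, c k y = 0 := fun k => by
          simp only [hcdef]; rw [if_neg h]
        rw [tsum_congr hck, tsum_zero]
    have SW : ∑ y : Y, (if 0 < obsProb T Q z u y ∧ 0 < obsProb T Q z' u y then
        obsProb T Q z' u y * rhoSeq fs (bayes T Q z u y) (bayes T Q z' u y) else 0) ≤
        (1 + αX) * D := by
      have hsum1 : Summable fun k : ℕ => ∑ y : Y, c k y :=
        (hasSum_sum fun y _ => (hcsum y).hasSum).summable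
      calc ∑ y : Y, (if 0 < obsProb T Q z u y ∧ 0 < obsProb T Q z' u y then
            obsProb T Q z' u y * rhoSeq fs (bayes T Q z u y) (bayes T Q z' u y) else 0)
          = ∑ y : Y, ∑' k : ℕ, c k y := Finset.sum_congr rfl fun y _ => hWc y
        _ = ∑' k : ℕ, ∑ y : Y, c k y := (Summable.tsum_finsetSum fun y _ => hcsum y).symm
        _ ≤ ∑' k : ℕ, (2:ℝ)⁻¹ ^ (k + 2) * (2 * ((1 + αX) * D)) := by
            refine Summable.tsum_le_tsum (fun k => ?_) hsum1 (hwsummable.mul_right _)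
            calc ∑ y : Y, c k y
                ≤ ∑ y : Y, (2:ℝ)⁻¹ ^ (k + 2) * (|obsProb T Q z u y - obsProb T Q z' u y| +
                  |(∫ x, Q x y * fs k x ∂(beliefPush T z u)) -
                   ∫ x, Q x y * fs k x ∂(beliefPush T z' u)|) :=
                  Finset.sum_le_sum fun y _ => hkey k y
              _ = (2:ℝ)⁻¹ ^ (k + 2) * ((∑ y : Y, |obsProb T Q z u y - obsProb T Q z' u y|) +
                  ∑ y : Y, |(∫ x, Q x y * fs k x ∂(beliefPush T z u)) -
                   ∫ x, Q x y * fs k x ∂(beliefPush T z' u)|) := by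
                  rw [← Finset.mul_sum, Finset.sum_add_distrib]
              _ ≤ (2:ℝ)⁻¹ ^ (k + 2) * ((1 + αX) * D + (1 + αX) * D) :=
                  mul_le_mul_of_nonneg_left (add_le_add S1 (SA k)) (by positivity)
              _ = (2:ℝ)⁻¹ ^ (k + 2) * (2 * ((1 + αX) * D)) := by ring
        _ = (∑' k : ℕ, (2:ℝ)⁻¹ ^ (k + 2)) * (2 * ((1 + αX) * D)) := tsum_mul_right
        _ = (1 + αX) * D := by rw [hwsum]; ring
    have hterm : ∀ y : Y,
        |(if 0 < obsProb T Q z u y then obsProb T Q z u y * f (bayes T Q z u y) else 0) -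
         (if 0 < obsProb T Q z' u y then obsProb T Q z' u y * f (bayes T Q z' u y) else 0)| ≤
        a * |obsProb T Q z u y - obsProb T Q z' u y| +
        b * (if 0 < obsProb T Q z u y ∧ 0 < obsProb T Q z' u y then
          obsProb T Q z' u y * rhoSeq fs (bayes T Q z u y) (bayes T Q z' u y) else 0) := by
      intro y
      by_cases h1 : 0 < obsProb T Q z u y <;> by_cases h2 : 0 < obsProb T Q z' u y
      · rw [if_pos h1, if_pos h2, if_pos ⟨h1, h2⟩]
        have hd : obsProb T Q z u y * f (bayes T Q z u y) -
            obsProb T Q z' u y * f (bayes T Q z' u y) =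
            (obsProb T Q z u y - obsProb T Q z' u y) * f (bayes T Q z u y) +
            obsProb T Q z' u y * (f (bayes T Q z u y) - f (bayes T Q z' u y)) := by ring
        rw [hd]
        calc |(obsProb T Q z u y - obsProb T Q z' u y) * f (bayes T Q z u y) +
              obsProb T Q z' u y * (f (bayes T Q z u y) - f (bayes T Q z' u y))|
            ≤ |(obsProb T Q z u y - obsProb T Q z' u y) * f (bayes T Q z u y)| +
              |obsProb T Q z' u y * (f (bayes T Q z u y) - f (bayes T Q z' u y))| := abs_add_le _ _
          _ = |obsProb T Q z u y - obsProb T Q z' u y| * |f (bayes T Q z u y)| +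
              obsProb T Q z' u y * |f (bayes T Q z u y) - f (bayes T Q z' u y)| := by
              rw [abs_mul, abs_mul, abs_of_pos h2]
          _ ≤ |obsProb T Q z u y - obsProb T Q z' u y| * a +
              obsProb T Q z' u y * (b * rhoSeq fs (bayes T Q z u y) (bayes T Q z' u y)) :=
              add_le_add (mul_le_mul_of_nonneg_left (hfa _) (abs_nonneg _))
                (mul_le_mul_of_nonneg_left (hflip _ _) h2.le)
          _ = a * |obsProb T Q z u y - obsProb T Q z' u y| +
              b * (obsProb T Q z' u y * rhoSeq fs (bayes T Q z u y) (bayes T Q z' u y)) := by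
              ring
      · rw [if_pos h1, if_neg h2, if_neg (fun hh => h2 hh.2)]
        have hP'0 : obsProb T Q z' u y = 0 := le_antisymm (not_lt.1 h2) (hP'nn y)
        rw [sub_zero, mul_zero, add_zero, hP'0, sub_zero, abs_mul]
        calc |obsProb T Q z u y| * |f (bayes T Q z u y)| ≤ |obsProb T Q z u y| * a :=
              mul_le_mul_of_nonneg_left (hfa _) (abs_nonneg _)
          _ = a * |obsProb T Q z u y| := mul_comm _ _
      · rw [if_neg h1, if_pos h2, if_neg (fun hh => h1 hh.1)]
        have hP0 : obsProb T Q z u y = 0 := le_antisymm (not_lt.1 h1) (hPnn y)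
        rw [mul_zero, add_zero, hP0, zero_sub, zero_sub, abs_neg, abs_neg, abs_mul]
        calc |obsProb T Q z' u y| * |f (bayes T Q z' u y)| ≤ |obsProb T Q z' u y| * a :=
              mul_le_mul_of_nonneg_left (hfa _) (abs_nonneg _)
          _ = a * |obsProb T Q z' u y| := mul_comm _ _
      · rw [if_neg h1, if_neg h2, if_neg (fun hh => h1 hh.1)]
        rw [sub_zero, abs_zero, mul_zero, add_zero]
        positivity
    calc |etaInt T Q f z u - etaInt T Q f z' u|
        = |∑ y : Y,
            ((if 0 < obsProb T Q z u y then obsProb T Q z u y * f (bayes T Q z u y) else 0) -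
             (if 0 < obsProb T Q z' u y then obsProb T Q z' u y * f (bayes T Q z' u y) else 0))| := by
          rw [etaInt, etaInt, Finset.sum_sub_distrib]
      _ ≤ ∑ y : Y,
            |(if 0 < obsProb T Q z u y then obsProb T Q z u y * f (bayes T Q z u y) else 0) -
             (if 0 < obsProb T Q z' u y then obsProb T Q z' u y * f (bayes T Q z' u y) else 0)| :=
          Finset.abs_sum_le_sum_abs _ _
      _ ≤ ∑ y : Y, (a * |obsProb T Q z u y - obsProb T Q z' u y| +
            b * (if 0 < obsProb T Q z u y ∧ 0 < obsProb T Q z' u y then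
              obsProb T Q z' u y * rhoSeq fs (bayes T Q z u y) (bayes T Q z' u y) else 0)) :=
          Finset.sum_le_sum fun y _ => hterm y
      _ = a * ∑ y : Y, |obsProb T Q z u y - obsProb T Q z' u y| +
          b * ∑ y : Y, (if 0 < obsProb T Q z u y ∧ 0 < obsProb T Q z' u y then
            obsProb T Q z' u y * rhoSeq fs (bayes T Q z u y) (bayes T Q z' u y) else 0) := by
          rw [Finset.sum_add_distrib, ← Finset.mul_sum, ← Finset.mul_sum]
      _ ≤ a * ((1 + αX) * D) + b * ((1 + αX) * D) :=
          add_le_add (mul_le_mul_of_nonneg_left S1 ha) (mul_le_mul_of_nonneg_left SW hb)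
      _ = (a + b) * ((1 + αX) * D) := by ring
      _ ≤ 1 * ((1 + αX) * D) := mul_le_mul_of_nonneg_right hab hβnn
      _ = (1 + αX) * D := one_mul _
end

section
/- Let X be a Borel subset of ℝ^m, Y a finite set, U a finite set, T a transition kernel from X×U to X and Q an observation kernel from X to Y, and let η be the associated belief transition kernel. Then, without any further assumptions, for every z, z' ∈ P(X), every u ∈ U, and every sequence (f_m)_{m≥1} of measurable functions f_m : X → ℝ with ‖f_m‖_∞ ≤ 1, one has ρ_BL^ρ(η(·|z,u), η(·|z',u)) ≤ 3 ‖z − z'‖_TV. -/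
open MeasureTheory

noncomputable section Helpers
open MeasureTheory
variable {X : Type*} [MeasurableSpace X]

lemma aux_integrable {μ : Measure X} [IsFiniteMeasure μ] {g : X → ℝ} (hg : Measurable g)
    {C : ℝ} (hb : ∀ x, |g x| ≤ C) : Integrable g μ :=
  Integrable.mono' (integrable_const C) hg.aestronglyMeasurable
    (ae_of_all _ fun x => by simpa using hb x)

lemma aux_abs_integral_le {μ : Measure X} [IsProbabilityMeasure μ] {g : X → ℝ}
    {C : ℝ} (hb : ∀ x, |g x| ≤ C) : |∫ x, g x ∂μ| ≤ C := by
  have := norm_integral_le_of_norm_le_const (μ := μ) (f := g) (C := C)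
    (ae_of_all _ fun x => by simpa using hb x)
  simpa using this

variable {U : Type*} {T : X → U → Measure X} {u : U} {z : Measure X}

lemma beliefPush_prob (hT : Measurable fun x : X => T x u)
    (hTp : ∀ x, IsProbabilityMeasure (T x u)) (hz : IsProbabilityMeasure z) :
    IsProbabilityMeasure (beliefPush T z u) := by
  constructor
  rw [beliefPush, Measure.bind_apply MeasurableSet.univ hT.aemeasurable]
  simp [(hTp _).measure_univ]

lemma integral_beliefPush_nonneg (hT : Measurable fun x : X => T x u)
    (hTp : ∀ x, IsProbabilityMeasure (T x u)) (hz : IsProbabilityMeasure z)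
    {G : X → ℝ} (hG : Measurable G) {C : ℝ} (h0 : ∀ x, 0 ≤ G x) (h2 : ∀ x, G x ≤ C) :
    ∫ t, G t ∂(beliefPush T z u) = ∫ x, (∫ t, G t ∂(T x u)) ∂z := by
  haveI := hz
  haveI := fun x => hTp x
  have hGm : Measurable fun t => ENNReal.ofReal (G t) := hG.ennreal_ofReal
  set L : X → ENNReal := fun x => ∫⁻ t, ENNReal.ofReal (G t) ∂(T x u) with hLdef
  have hL_meas : Measurable L := (Measure.measurable_lintegral hGm).comp hT
  have hLle : ∀ x, L x ≤ ENNReal.ofReal C := by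
    intro x
    calc L x ≤ ∫⁻ _, ENNReal.ofReal C ∂(T x u) :=
          lintegral_mono fun t => ENNReal.ofReal_le_ofReal (h2 t)
      _ = ENNReal.ofReal C := by simp [(hTp x).measure_univ]
  have hLne : ∀ x, L x ≠ ⊤ := fun x => ((hLle x).trans_lt ENNReal.ofReal_lt_top).ne
  have key : ∀ (μ : Measure X), ∫ t, G t ∂μ = (∫⁻ t, ENNReal.ofReal (G t) ∂μ).toReal :=
    fun μ => integral_eq_lintegral_of_nonneg_ae (ae_of_all _ h0) hG.aestronglyMeasurable
  rw [key, beliefPush, Measure.lintegral_bind hT.aemeasurable hGm.aemeasurable]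
  have hinner : ∀ x, ∫ t, G t ∂(T x u) = (L x).toReal := fun x => key (T x u)
  have hRHS : ∫ x, (∫ t, G t ∂(T x u)) ∂z = ∫ x, (L x).toReal ∂z := by
    simp_rw [hinner]
  rw [hRHS, integral_eq_lintegral_of_nonneg_ae (ae_of_all _ fun x => ENNReal.toReal_nonneg)
    hL_meas.ennreal_toReal.aestronglyMeasurable]
  congr 1
  apply lintegral_congr
  intro x
  exact (ENNReal.ofReal_toReal (hLne x)).symm

lemma integral_beliefPush (hT : Measurable fun x : X => T x u)
    (hTp : ∀ x, IsProbabilityMeasure (T x u)) (hz : IsProbabilityMeasure z)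
    {G : X → ℝ} (hG : Measurable G) {C : ℝ} (hb : ∀ x, |G x| ≤ C) :
    ∫ t, G t ∂(beliefPush T z u) = ∫ x, (∫ t, G t ∂(T x u)) ∂z := by
  haveI := hz
  haveI := fun x => hTp x
  haveI := beliefPush_prob hT hTp hz
  have h0 : ∀ x, 0 ≤ G x + C := fun x => by have := (abs_le.mp (hb x)).1; linarith
  have h2 : ∀ x, G x + C ≤ C + C := fun x => by have := (abs_le.mp (hb x)).2; linarith
  have hG' : Measurable fun t => G t + C := hG.add_const C
  have hnn := integral_beliefPush_nonneg hT hTp hz hG' h0 h2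
  have hsplit : ∀ (μ : Measure X), IsProbabilityMeasure μ →
      ∫ t, (G t + C) ∂μ = (∫ t, G t ∂μ) + C := by
    intro μ hμ
    haveI := hμ
    rw [integral_add (aux_integrable hG hb) (integrable_const C)]
    simp
  have hH_meas : Measurable fun x => ∫ t, G t ∂(T x u) := by
    have : (fun x => ∫ t, G t ∂(T x u)) =
        fun x => (∫⁻ t, ENNReal.ofReal (G t + C) ∂(T x u)).toReal - C := by
      funext x
      rw [← integral_eq_lintegral_of_nonneg_ae (ae_of_all _ h0) hG'.aestronglyMeasurable,
        hsplit (T x u) (hTp x)]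
      ring
    rw [this]
    exact (((Measure.measurable_lintegral hG'.ennreal_ofReal).comp hT).ennreal_toReal).sub
      measurable_const
  have hHb : ∀ x, |∫ t, G t ∂(T x u)| ≤ C := fun x => aux_abs_integral_le hb
  rw [hsplit _ (beliefPush_prob hT hTp hz)] at hnn
  rw [show (fun x => ∫ t, (G t + C) ∂(T x u)) = fun x => (∫ t, G t ∂(T x u)) + C from
    funext fun x => hsplit (T x u) (hTp x)] at hnn
  rw [integral_add (aux_integrable hH_meas hHb) (integrable_const C)] at hnn
  simp at hnn
  linarith

end Helpers

noncomputable section Helpers2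
open MeasureTheory
variable {X : Type*} [MeasurableSpace X]
variable {U : Type*} {T : X → U → Measure X} {u : U}

lemma measurable_integral_T (hT : Measurable fun x : X => T x u)
    (hTp : ∀ x, IsProbabilityMeasure (T x u))
    {G : X → ℝ} (hG : Measurable G) {C : ℝ} (hb : ∀ x, |G x| ≤ C) :
    Measurable fun x => ∫ t, G t ∂(T x u) := by
  have h0 : ∀ x, 0 ≤ G x + C := fun x => by have := (abs_le.mp (hb x)).1; linarith
  have hG' : Measurable fun t => G t + C := hG.add_const C
  have : (fun x => ∫ t, G t ∂(T x u)) =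
      fun x => (∫⁻ t, ENNReal.ofReal (G t + C) ∂(T x u)).toReal - C := by
    funext x
    haveI := hTp x
    rw [← integral_eq_lintegral_of_nonneg_ae (ae_of_all _ h0) hG'.aestronglyMeasurable,
      integral_add (aux_integrable hG hb) (integrable_const C)]
    simp
  rw [this]
  exact (((Measure.measurable_lintegral hG'.ennreal_ofReal).comp hT).ennreal_toReal).sub
    measurable_const

lemma tvDist_bddAbove {z z' : Measure X} (hz : IsProbabilityMeasure z)
    (hz' : IsProbabilityMeasure z') :
    BddAbove {r | ∃ f : X → ℝ, Measurable f ∧ (∀ x, |f x| ≤ 1) ∧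
      r = |∫ x, f x ∂z - ∫ x, f x ∂z'|} := by
  haveI := hz; haveI := hz'
  refine ⟨2, fun r hr => ?_⟩
  obtain ⟨f, hf, hb, rfl⟩ := hr
  calc |∫ x, f x ∂z - ∫ x, f x ∂z'| ≤ |∫ x, f x ∂z| + |∫ x, f x ∂z'| := abs_sub _ _
    _ ≤ 1 + 1 := add_le_add (aux_abs_integral_le hb) (aux_abs_integral_le hb)
    _ = 2 := by norm_num

lemma le_tvDist {z z' : Measure X} (hz : IsProbabilityMeasure z)
    (hz' : IsProbabilityMeasure z') {f : X → ℝ} (hf : Measurable f)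
    (hb : ∀ x, |f x| ≤ 1) : |∫ x, f x ∂z - ∫ x, f x ∂z'| ≤ tvDist z z' :=
  le_csSup (tvDist_bddAbove hz hz') ⟨f, hf, hb, rfl⟩

lemma tvDist_nonneg {z z' : Measure X} (hz : IsProbabilityMeasure z)
    (hz' : IsProbabilityMeasure z') : 0 ≤ tvDist z z' := by
  have := le_tvDist hz hz' (f := fun _ => 0) measurable_const (by simp)
  simpa using this

lemma tv_bound {Y : Type*} [Fintype Y] {z z' : Measure X}
    (hT : Measurable fun x : X => T x u) (hTp : ∀ x, IsProbabilityMeasure (T x u))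
    (hz : IsProbabilityMeasure z) (hz' : IsProbabilityMeasure z')
    (g : Y → X → ℝ) (hg : ∀ y, Measurable (g y)) (hb : ∀ x, ∑ y, |g y x| ≤ 1) :
    ∑ y, |∫ x, g y x ∂(beliefPush T z u) - ∫ x, g y x ∂(beliefPush T z' u)|
      ≤ tvDist z z' := by
  haveI := hz; haveI := hz'
  haveI := beliefPush_prob hT hTp hz
  haveI := beliefPush_prob hT hTp hz'
  have hgb : ∀ y x, |g y x| ≤ 1 := fun y x =>
    le_trans (Finset.single_le_sum (f := fun y => |g y x|)
      (fun y _ => abs_nonneg _) (Finset.mem_univ y)) (hb x)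
  set d : Y → ℝ := fun y =>
    ∫ x, g y x ∂(beliefPush T z u) - ∫ x, g y x ∂(beliefPush T z' u) with hd
  set ε : Y → ℝ := fun y => if 0 ≤ d y then 1 else -1 with hε
  have hεd : ∀ y, |d y| = ε y * d y := by
    intro y
    by_cases h : 0 ≤ d y
    · simp [hε, h, abs_of_nonneg h]
    · simp [hε, h, abs_of_neg (lt_of_not_ge h)]
  have hε1 : ∀ y, |ε y| = 1 := by
    intro y; by_cases h : 0 ≤ d y <;> simp [hε, h]
  set G : X → ℝ := fun x => ∑ y, ε y * g y x with hGdef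
  have hG_meas : Measurable G :=
    Finset.measurable_sum _ fun y _ => (hg y).const_mul (ε y)
  have hGb : ∀ x, |G x| ≤ 1 := by
    intro x
    calc |G x| ≤ ∑ y, |ε y * g y x| := Finset.abs_sum_le_sum_abs _ _
      _ = ∑ y, |g y x| := by
          apply Finset.sum_congr rfl; intro y _; rw [abs_mul, hε1 y, one_mul]
      _ ≤ 1 := hb x
  have hint : ∀ (y : Y) (μ : Measure X) (_ : IsProbabilityMeasure μ), Integrable (g y) μ :=
    fun y μ hμ => by haveI := hμ; exact aux_integrable (hg y) (hgb y)
  have hGint : ∀ (μ : Measure X), IsProbabilityMeasure μ →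
      ∫ x, G x ∂μ = ∑ y, ε y * ∫ x, g y x ∂μ := by
    intro μ hμ
    rw [hGdef]
    rw [integral_finset_sum _ fun y _ => ((hint y μ hμ).const_mul (ε y))]
    simp_rw [MeasureTheory.integral_const_mul]
  have hsum : ∑ y, |d y| =
      ∫ x, G x ∂(beliefPush T z u) - ∫ x, G x ∂(beliefPush T z' u) := by
    rw [hGint _ ‹_›, hGint _ ‹_›, ← Finset.sum_sub_distrib]
    apply Finset.sum_congr rfl
    intro y _
    rw [hεd y, hd]
    ring
  have hH_meas : Measurable fun x => ∫ t, G t ∂(T x u) :=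
    measurable_integral_T hT hTp hG_meas hGb
  have hHb : ∀ x, |∫ t, G t ∂(T x u)| ≤ 1 := by
    intro x; haveI := hTp x; exact aux_abs_integral_le hGb
  rw [hsum, integral_beliefPush hT hTp hz hG_meas hGb,
    integral_beliefPush hT hTp hz' hG_meas hGb]
  exact le_trans (le_abs_self _) (le_tvDist hz hz' hH_meas hHb)

end Helpers2

noncomputable section Helpers3
open MeasureTheory
variable {X : Type*} [MeasurableSpace X]
variable {U : Type*} {T : X → U → Measure X} {u : U}
variable {Y : Type*} [Fintype Y]

lemma geom_half : ∑' k : ℕ, ((2:ℝ)⁻¹)^(k+2) = 2⁻¹ := by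
  simp_rw [pow_add]
  rw [tsum_mul_right, tsum_geometric_of_lt_one (by norm_num) (by norm_num)]
  norm_num

lemma c_summable : Summable (fun k : ℕ => ((2:ℝ)⁻¹)^(k+2)) := by
  simp_rw [pow_add]
  exact (summable_geometric_of_lt_one (by norm_num) (by norm_num)).mul_right _

lemma obsProb_nonneg {Q : X → Y → ℝ} {z : Measure X} {y : Y}
    (hQnn : ∀ x y, 0 ≤ Q x y) : 0 ≤ obsProb T Q z u y :=
  integral_nonneg fun x => hQnn x y

lemma obsProb_le_one {Q : X → Y → ℝ} {z : Measure X} {y : Y}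
    (hQm : ∀ y, Measurable fun x => Q x y) (hQnn : ∀ x y, 0 ≤ Q x y)
    (hQs : ∀ x, ∑ y, Q x y = 1)
    (hν : IsProbabilityMeasure (beliefPush T z u)) : obsProb T Q z u y ≤ 1 := by
  haveI := hν
  have hQ1 : ∀ x, Q x y ≤ 1 := fun x =>
    le_trans (Finset.single_le_sum (f := fun y => Q x y) (fun y _ => hQnn x y)
      (Finset.mem_univ y)) (hQs x).le
  have h := aux_abs_integral_le (μ := beliefPush T z u) (g := fun x => Q x y) (C := 1)
    (fun x => abs_le.mpr ⟨by linarith [hQnn x y], hQ1 x⟩)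
  exact le_trans (le_abs_self _) h

lemma bayes_mul {Q : X → Y → ℝ} {z : Measure X} {y : Y}
    (hQm : Measurable fun x => Q x y) (hQnn : ∀ x, 0 ≤ Q x y)
    (hp : 0 < obsProb T Q z u y) (f : X → ℝ) :
    obsProb T Q z u y * ∫ t, f t ∂(bayes T Q z u y)
      = ∫ x, Q x y * f x ∂(beliefPush T z u) := by
  rw [bayes, integral_smul_measure]
  have hd : (fun x => ENNReal.ofReal (Q x y))
      = (fun x => ((Real.toNNReal (Q x y) : NNReal) : ENNReal)) := rfl
  rw [hd, integral_withDensity_eq_integral_smul hQm.real_toNNReal]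
  simp_rw [NNReal.smul_def, Real.coe_toNNReal _ (hQnn _), smul_eq_mul]
  rw [ENNReal.toReal_inv, ENNReal.toReal_ofReal hp.le]
  field_simp

lemma J_abs_le {Q : X → Y → ℝ} {z : Measure X} {y : Y}
    (hQm : Measurable fun x => Q x y) (hQnn : ∀ x, 0 ≤ Q x y) (hQ1 : ∀ x, Q x y ≤ 1)
    (hν : IsProbabilityMeasure (beliefPush T z u))
    {f : X → ℝ} (hf : Measurable f) (hfb : ∀ x, |f x| ≤ 1) :
    |∫ x, Q x y * f x ∂(beliefPush T z u)| ≤ obsProb T Q z u y := by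
  haveI := hν
  have h1 : |∫ x, Q x y * f x ∂(beliefPush T z u)|
      ≤ ∫ x, |Q x y * f x| ∂(beliefPush T z u) := by
    have h := norm_integral_le_integral_norm (μ := beliefPush T z u)
      (f := fun x => Q x y * f x)
    simp only [Real.norm_eq_abs] at h
    exact h
  refine h1.trans ?_
  apply integral_mono
  · exact aux_integrable (hQm.mul hf).abs (C := 1) fun x => by
      rw [abs_abs, abs_mul, abs_of_nonneg (hQnn x)]
      calc Q x y * |f x| ≤ 1 * 1 :=
        mul_le_mul (hQ1 x) (hfb x) (abs_nonneg _) zero_le_one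
      _ = 1 := one_mul 1
  · exact aux_integrable hQm (C := 1) fun x => abs_le.mpr ⟨by linarith [hQnn x], hQ1 x⟩
  · intro x
    show |Q x y * f x| ≤ Q x y
    rw [abs_mul, abs_of_nonneg (hQnn x)]
    calc Q x y * |f x| ≤ Q x y * 1 := mul_le_mul_of_nonneg_left (hfb x) (hQnn x)
      _ = Q x y := mul_one _

end Helpers3
theorem statement2 {m : ℕ} (Xs : Set (EuclideanSpace ℝ (Fin m))) (hXs : MeasurableSet Xs)
    {Y U : Type*} [Fintype Y] [Fintype U]
    (T : Xs → U → MeasureTheory.Measure Xs)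
    (hT_meas : ∀ u : U, Measurable fun x : Xs => T x u)
    (hT_prob : ∀ (x : Xs) (u : U), MeasureTheory.IsProbabilityMeasure (T x u))
    (Q : Xs → Y → ℝ)
    (hQ_meas : ∀ y : Y, Measurable fun x : Xs => Q x y)
    (hQ_nonneg : ∀ (x : Xs) (y : Y), 0 ≤ Q x y)
    (hQ_sum : ∀ x : Xs, ∑ y : Y, Q x y = 1)
    (fs : ℕ → Xs → ℝ)
    (hfs_meas : ∀ k, Measurable (fs k))
    (hfs_bdd : ∀ (k : ℕ) (x : Xs), |fs k x| ≤ 1)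
    (z z' : MeasureTheory.Measure Xs)
    (hz : MeasureTheory.IsProbabilityMeasure z)
    (hz' : MeasureTheory.IsProbabilityMeasure z')
    (u : U) :
    etaBLDist T Q (rhoSeq fs) z z' u ≤ 3 * tvDist z z' := by
  classical
  haveI := hz; haveI := hz'
  have hTprob : ∀ x, IsProbabilityMeasure (T x u) := fun x => hT_prob x u
  haveI hν : IsProbabilityMeasure (beliefPush T z u) := beliefPush_prob (hT_meas u) hTprob hz
  haveI hν' : IsProbabilityMeasure (beliefPush T z' u) := beliefPush_prob (hT_meas u) hTprob hz'
  have htv0 : 0 ≤ tvDist z z' := tvDist_nonneg hz hz'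
  have hQ1 : ∀ (x : Xs) (y : Y), Q x y ≤ 1 := fun x y =>
    le_trans (Finset.single_le_sum (f := fun y => Q x y) (fun y _ => hQ_nonneg x y)
      (Finset.mem_univ y)) (hQ_sum x).le
  have hp0 : ∀ y : Y, 0 ≤ obsProb T Q z u y := fun y => obsProb_nonneg hQ_nonneg
  have hp'0 : ∀ y : Y, 0 ≤ obsProb T Q z' u y := fun y => obsProb_nonneg hQ_nonneg
  have hc0 : ∀ k : ℕ, (0:ℝ) ≤ (2:ℝ)⁻¹^(k+2) := fun k => pow_nonneg (by norm_num) _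
  have hcsum : Summable (fun k : ℕ => (2:ℝ)⁻¹^(k+2)) := c_summable
  -- J bounds
  have hJb : ∀ (k : ℕ) (y : Y), |∫ x, Q x y * fs k x ∂(beliefPush T z u)| ≤ obsProb T Q z u y :=
    fun k y => J_abs_le (hQ_meas y) (fun x => hQ_nonneg x y) (fun x => hQ1 x y) hν
      (hfs_meas k) (hfs_bdd k)
  have hJ'b : ∀ (k : ℕ) (y : Y),
      |∫ x, Q x y * fs k x ∂(beliefPush T z' u)| ≤ obsProb T Q z' u y :=
    fun k y => J_abs_le (hQ_meas y) (fun x => hQ_nonneg x y) (fun x => hQ1 x y) hν'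
      (hfs_meas k) (hfs_bdd k)
  have hp1 : ∀ y : Y, obsProb T Q z u y ≤ 1 := fun y =>
    obsProb_le_one hQ_meas hQ_nonneg hQ_sum hν
  have hp'1 : ∀ y : Y, obsProb T Q z' u y ≤ 1 := fun y =>
    obsProb_le_one hQ_meas hQ_nonneg hQ_sum hν'
  have hJJ'b : ∀ (k : ℕ) (y : Y),
      |(∫ x, Q x y * fs k x ∂(beliefPush T z u)) - ∫ x, Q x y * fs k x ∂(beliefPush T z' u)| ≤ 2 := by
    intro k y
    calc |(∫ x, Q x y * fs k x ∂(beliefPush T z u)) - ∫ x, Q x y * fs k x ∂(beliefPush T z' u)|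
        ≤ |∫ x, Q x y * fs k x ∂(beliefPush T z u)| + |∫ x, Q x y * fs k x ∂(beliefPush T z' u)| :=
          abs_sub _ _
      _ ≤ 1 + 1 := add_le_add ((hJb k y).trans (hp1 y)) ((hJ'b k y).trans (hp'1 y))
      _ = 2 := by norm_num
  -- sum of |p - p'| over y
  have hΔ : ∑ y : Y, |obsProb T Q z u y - obsProb T Q z' u y| ≤ tvDist z z' := by
    have := tv_bound (hT_meas u) hTprob hz hz' (fun y x => Q x y) hQ_meas
      (fun x => by
        have : ∀ y : Y, |Q x y| = Q x y := fun y => abs_of_nonneg (hQ_nonneg x y)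
        simp_rw [this]
        exact (hQ_sum x).le)
    exact this
  -- sum over y of |J k y - J' k y|, per k
  have hk : ∀ k : ℕ, ∑ y : Y,
      |(∫ x, Q x y * fs k x ∂(beliefPush T z u)) - ∫ x, Q x y * fs k x ∂(beliefPush T z' u)|
        ≤ tvDist z z' := by
    intro k
    exact tv_bound (hT_meas u) hTprob hz hz' (fun y x => Q x y * fs k x)
      (fun y => (hQ_meas y).mul (hfs_meas k))
      (fun x => by
        have h1 : ∀ y : Y, |Q x y * fs k x| = Q x y * |fs k x| := fun y => by
          rw [abs_mul, abs_of_nonneg (hQ_nonneg x y)]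
        simp_rw [h1, ← Finset.sum_mul, hQ_sum x, one_mul]
        exact hfs_bdd k x)
  -- summability per y
  have hky : ∀ y : Y, Summable (fun k : ℕ => (2:ℝ)⁻¹^(k+2) *
      |(∫ x, Q x y * fs k x ∂(beliefPush T z u)) - ∫ x, Q x y * fs k x ∂(beliefPush T z' u)|) :=
    fun y => Summable.of_nonneg_of_le (fun k => mul_nonneg (hc0 k) (abs_nonneg _))
      (fun k => mul_le_mul_of_nonneg_left (hJJ'b k y) (hc0 k)) (hcsum.mul_right 2)
  -- the S-sum bound
  have hSsum : ∑ y : Y, (∑' k : ℕ, (2:ℝ)⁻¹^(k+2) *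
      |(∫ x, Q x y * fs k x ∂(beliefPush T z u)) - ∫ x, Q x y * fs k x ∂(beliefPush T z' u)|)
        ≤ 2⁻¹ * tvDist z z' := by
    rw [← Summable.tsum_finsetSum (fun y _ => hky y)]
    have hstep : ∀ k : ℕ, ∑ y : Y, (2:ℝ)⁻¹^(k+2) *
        |(∫ x, Q x y * fs k x ∂(beliefPush T z u)) - ∫ x, Q x y * fs k x ∂(beliefPush T z' u)|
          ≤ (2:ℝ)⁻¹^(k+2) * tvDist z z' := by
      intro k
      rw [← Finset.mul_sum]
      exact mul_le_mul_of_nonneg_left (hk k) (hc0 k)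
    have hA : Summable (fun k : ℕ => ∑ y : Y, (2:ℝ)⁻¹^(k+2) *
        |(∫ x, Q x y * fs k x ∂(beliefPush T z u)) - ∫ x, Q x y * fs k x ∂(beliefPush T z' u)|) :=
      Summable.of_nonneg_of_le
        (fun k => Finset.sum_nonneg fun y _ => mul_nonneg (hc0 k) (abs_nonneg _))
        hstep (hcsum.mul_right _)
    calc ∑' k : ℕ, ∑ y : Y, (2:ℝ)⁻¹^(k+2) *
        |(∫ x, Q x y * fs k x ∂(beliefPush T z u)) - ∫ x, Q x y * fs k x ∂(beliefPush T z' u)|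
        ≤ ∑' k : ℕ, (2:ℝ)⁻¹^(k+2) * tvDist z z' := Summable.tsum_le_tsum hstep hA (hcsum.mul_right _)
      _ = 2⁻¹ * tvDist z z' := by rw [tsum_mul_right, geom_half]
  have hS0 : ∀ y : Y, 0 ≤ ∑' k : ℕ, (2:ℝ)⁻¹^(k+2) *
      |(∫ x, Q x y * fs k x ∂(beliefPush T z u)) - ∫ x, Q x y * fs k x ∂(beliefPush T z' u)| :=
    fun y => tsum_nonneg fun k => mul_nonneg (hc0 k) (abs_nonneg _)
  -- main sup bound
  apply Real.sSup_le _ (by linarith)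
  rintro r ⟨f, ⟨a, b, ha, hb, hab, hfa, hfl⟩, rfl⟩
  have hEta : ∀ (w : Measure Xs),
      etaInt T Q f w u = ∑ y : Y, obsProb T Q w u y * f (bayes T Q w u y) := by
    intro w
    apply Finset.sum_congr rfl
    intro y _
    by_cases h : 0 < obsProb T Q w u y
    · simp [h]
    · have h0 : obsProb T Q w u y = 0 :=
        le_antisymm (not_lt.mp h) (obsProb_nonneg hQ_nonneg)
      simp [h, h0]
  -- per-y key bound
  have hkey : ∀ y : Y,
      |obsProb T Q z u y * f (bayes T Q z u y) - obsProb T Q z' u y * f (bayes T Q z' u y)|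
        ≤ a * |obsProb T Q z u y - obsProb T Q z' u y|
          + b * (∑' k : ℕ, (2:ℝ)⁻¹^(k+2) *
            |(∫ x, Q x y * fs k x ∂(beliefPush T z u))
              - ∫ x, Q x y * fs k x ∂(beliefPush T z' u)|)
          + (b * 2⁻¹) * |obsProb T Q z u y - obsProb T Q z' u y| := by
    intro y
    set p := obsProb T Q z u y with hpd
    set p' := obsProb T Q z' u y with hp'd
    set v := f (bayes T Q z u y) with hvd
    set v' := f (bayes T Q z' u y) with hv'd
    have hva : |v| ≤ a := hfa _
    have hv'a : |v'| ≤ a := hfa _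
    rcases eq_or_lt_of_le (hp0 y) with h0 | hpos
    · -- p = 0
      have hpy : p = 0 := h0.symm
      have hΔy : |p - p'| = p' := by rw [hpy, zero_sub, abs_neg, abs_of_nonneg (hp'0 y)]
      have h1 : |p * v - p' * v'| = p' * |v'| := by
        rw [hpy, zero_mul, zero_sub, abs_neg, abs_mul, abs_of_nonneg (hp'0 y)]
      rw [h1, hΔy]
      nlinarith [mul_le_mul_of_nonneg_left hv'a (hp'0 y), hS0 y, hb, hp'0 y]
    rcases eq_or_lt_of_le (hp'0 y) with h0' | hpos'
    · -- p' = 0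
      have hpy : p' = 0 := h0'.symm
      have hΔy : |p - p'| = p := by rw [hpy, sub_zero, abs_of_nonneg (hp0 y)]
      have h1 : |p * v - p' * v'| = p * |v| := by
        rw [hpy, zero_mul, sub_zero, abs_mul, abs_of_nonneg (hp0 y)]
      rw [h1, hΔy]
      nlinarith [mul_le_mul_of_nonneg_left hva (hp0 y), hS0 y, hb, hp0 y]
    · -- both positive
      have hbay : ∀ k : ℕ, p * ∫ t, fs k t ∂(bayes T Q z u y)
          = ∫ x, Q x y * fs k x ∂(beliefPush T z u) :=
        fun k => bayes_mul (hQ_meas y) (fun x => hQ_nonneg x y) hpos (fs k)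
      have hbay' : ∀ k : ℕ, p' * ∫ t, fs k t ∂(bayes T Q z' u y)
          = ∫ x, Q x y * fs k x ∂(beliefPush T z' u) :=
        fun k => bayes_mul (hQ_meas y) (fun x => hQ_nonneg x y) hpos' (fs k)
      have hI' : ∀ k : ℕ, |∫ t, fs k t ∂(bayes T Q z' u y)| ≤ 1 := by
        intro k
        have h2 := hJ'b k y
        rw [← hbay' k, abs_mul, abs_of_nonneg (hp'0 y)] at h2
        exact le_of_mul_le_mul_left (h2.trans_eq (mul_one _).symm) hpos'
      -- per-k term bound
      have hterm : ∀ k : ℕ, p * ((2:ℝ)⁻¹^(k+2) *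
          |(∫ t, fs k t ∂(bayes T Q z u y)) - ∫ t, fs k t ∂(bayes T Q z' u y)|)
            ≤ (2:ℝ)⁻¹^(k+2) *
              |(∫ x, Q x y * fs k x ∂(beliefPush T z u))
                - ∫ x, Q x y * fs k x ∂(beliefPush T z' u)|
              + (2:ℝ)⁻¹^(k+2) * |p - p'| := by
        intro k
        set I := ∫ t, fs k t ∂(bayes T Q z u y) with hId
        set I' := ∫ t, fs k t ∂(bayes T Q z' u y) with hI'd
        set Jk := ∫ x, Q x y * fs k x ∂(beliefPush T z u) with hJd
        set J'k := ∫ x, Q x y * fs k x ∂(beliefPush T z' u) with hJ'd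
        have e1 : p * ((2:ℝ)⁻¹^(k+2) * |I - I'|) = (2:ℝ)⁻¹^(k+2) * |p * I - p * I'| := by
          rw [← mul_sub, abs_mul, abs_of_nonneg (hp0 y)]
          ring
        have e2 : p * I = Jk := by rw [hId, hJd]; exact hbay k
        have e3 : p * I' = J'k + (p - p') * I' := by
          rw [hI'd, hJ'd]; linear_combination hbay' k
        have e4 : |p * I - p * I'| ≤ |Jk - J'k| + |p - p'| := by
          rw [e2, e3]
          calc |Jk - (J'k + (p - p') * I')| = |(Jk - J'k) - (p - p') * I'| := by ring_nf
            _ ≤ |Jk - J'k| + |(p - p') * I'| := abs_sub _ _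
            _ ≤ |Jk - J'k| + |p - p'| := by
                refine add_le_add_right ?_ _
                rw [abs_mul]
                calc |p - p'| * |I'| ≤ |p - p'| * 1 :=
                  mul_le_mul_of_nonneg_left (hI' k) (abs_nonneg _)
                _ = |p - p'| := mul_one _
        rw [e1]
        calc (2:ℝ)⁻¹^(k+2) * |p * I - p * I'| ≤ (2:ℝ)⁻¹^(k+2) * (|Jk - J'k| + |p - p'|) :=
            mul_le_mul_of_nonneg_left e4 (hc0 k)
          _ = (2:ℝ)⁻¹^(k+2) * |Jk - J'k| + (2:ℝ)⁻¹^(k+2) * |p - p'| := mul_add _ _ _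
      -- summabilities
      have hsumJ := hky y
      have hsumΔ : Summable (fun k : ℕ => (2:ℝ)⁻¹^(k+2) * |p - p'|) := hcsum.mul_right _
      have hsum1 : Summable (fun k : ℕ => (2:ℝ)⁻¹^(k+2) *
          |(∫ x, Q x y * fs k x ∂(beliefPush T z u))
            - ∫ x, Q x y * fs k x ∂(beliefPush T z' u)|
          + (2:ℝ)⁻¹^(k+2) * |p - p'|) := hsumJ.add hsumΔ
      have hsum0 : Summable (fun k : ℕ => p * ((2:ℝ)⁻¹^(k+2) *
          |(∫ t, fs k t ∂(bayes T Q z u y)) - ∫ t, fs k t ∂(bayes T Q z' u y)|)) :=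
        Summable.of_nonneg_of_le
          (fun k => mul_nonneg (hp0 y) (mul_nonneg (hc0 k) (abs_nonneg _)))
          hterm hsum1
      -- p * rho bound
      have hR : p * rhoSeq fs (bayes T Q z u y) (bayes T Q z' u y)
          ≤ (∑' k : ℕ, (2:ℝ)⁻¹^(k+2) *
              |(∫ x, Q x y * fs k x ∂(beliefPush T z u))
                - ∫ x, Q x y * fs k x ∂(beliefPush T z' u)|)
            + 2⁻¹ * |p - p'| := by
        rw [rhoSeq, ← tsum_mul_left]
        calc (∑' k : ℕ, p * ((2:ℝ)⁻¹^(k+2) *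
            |(∫ t, fs k t ∂(bayes T Q z u y)) - ∫ t, fs k t ∂(bayes T Q z' u y)|))
            ≤ ∑' k : ℕ, ((2:ℝ)⁻¹^(k+2) *
              |(∫ x, Q x y * fs k x ∂(beliefPush T z u))
                - ∫ x, Q x y * fs k x ∂(beliefPush T z' u)|
              + (2:ℝ)⁻¹^(k+2) * |p - p'|) := Summable.tsum_le_tsum hterm hsum0 hsum1
          _ = (∑' k : ℕ, (2:ℝ)⁻¹^(k+2) *
              |(∫ x, Q x y * fs k x ∂(beliefPush T z u))
                - ∫ x, Q x y * fs k x ∂(beliefPush T z' u)|)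
              + (∑' k : ℕ, (2:ℝ)⁻¹^(k+2)) * |p - p'| := by
              rw [Summable.tsum_add hsumJ hsumΔ, tsum_mul_right]
          _ = _ := by rw [geom_half]
      have h5 : |v - v'| ≤ b * rhoSeq fs (bayes T Q z u y) (bayes T Q z' u y) := hfl _ _
      have hRnn : 0 ≤ rhoSeq fs (bayes T Q z u y) (bayes T Q z' u y) :=
        tsum_nonneg fun k => mul_nonneg (hc0 k) (abs_nonneg _)
      calc |p * v - p' * v'| = |p * (v - v') + (p - p') * v'| := by ring_nf
        _ ≤ |p * (v - v')| + |(p - p') * v'| := abs_add_le _ _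
        _ = p * |v - v'| + |p - p'| * |v'| := by
            rw [abs_mul, abs_mul, abs_of_nonneg (hp0 y)]
        _ ≤ p * (b * rhoSeq fs (bayes T Q z u y) (bayes T Q z' u y)) + |p - p'| * a :=
            add_le_add (mul_le_mul_of_nonneg_left h5 (hp0 y))
              (mul_le_mul_of_nonneg_left hv'a (abs_nonneg _))
        _ = b * (p * rhoSeq fs (bayes T Q z u y) (bayes T Q z' u y)) + a * |p - p'| := by ring
        _ ≤ b * ((∑' k : ℕ, (2:ℝ)⁻¹^(k+2) *
              |(∫ x, Q x y * fs k x ∂(beliefPush T z u))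
                - ∫ x, Q x y * fs k x ∂(beliefPush T z' u)|)
              + 2⁻¹ * |p - p'|) + a * |p - p'| :=
            add_le_add_left (mul_le_mul_of_nonneg_left hR hb) _
        _ = a * |p - p'|
            + b * (∑' k : ℕ, (2:ℝ)⁻¹^(k+2) *
              |(∫ x, Q x y * fs k x ∂(beliefPush T z u))
                - ∫ x, Q x y * fs k x ∂(beliefPush T z' u)|)
            + (b * 2⁻¹) * |p - p'| := by ring
  -- assemble
  rw [hEta z, hEta z']
  have hΔ0 : 0 ≤ ∑ y : Y, |obsProb T Q z u y - obsProb T Q z' u y| :=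
    Finset.sum_nonneg fun y _ => abs_nonneg _
  have hSS0 : 0 ≤ ∑ y : Y, (∑' k : ℕ, (2:ℝ)⁻¹^(k+2) *
      |(∫ x, Q x y * fs k x ∂(beliefPush T z u)) - ∫ x, Q x y * fs k x ∂(beliefPush T z' u)|) :=
    Finset.sum_nonneg fun y _ => hS0 y
  calc |(∑ y : Y, obsProb T Q z u y * f (bayes T Q z u y))
      - ∑ y : Y, obsProb T Q z' u y * f (bayes T Q z' u y)|
      = |∑ y : Y, (obsProb T Q z u y * f (bayes T Q z u y)
          - obsProb T Q z' u y * f (bayes T Q z' u y))| := by rw [Finset.sum_sub_distrib]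
    _ ≤ ∑ y : Y, |obsProb T Q z u y * f (bayes T Q z u y)
          - obsProb T Q z' u y * f (bayes T Q z' u y)| := Finset.abs_sum_le_sum_abs _ _
    _ ≤ ∑ y : Y, (a * |obsProb T Q z u y - obsProb T Q z' u y|
          + b * (∑' k : ℕ, (2:ℝ)⁻¹^(k+2) *
            |(∫ x, Q x y * fs k x ∂(beliefPush T z u))
              - ∫ x, Q x y * fs k x ∂(beliefPush T z' u)|)
          + (b * 2⁻¹) * |obsProb T Q z u y - obsProb T Q z' u y|) :=
        Finset.sum_le_sum fun y _ => hkey y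
    _ = a * (∑ y : Y, |obsProb T Q z u y - obsProb T Q z' u y|)
        + b * (∑ y : Y, ∑' k : ℕ, (2:ℝ)⁻¹^(k+2) *
            |(∫ x, Q x y * fs k x ∂(beliefPush T z u))
              - ∫ x, Q x y * fs k x ∂(beliefPush T z' u)|)
        + (b * 2⁻¹) * (∑ y : Y, |obsProb T Q z u y - obsProb T Q z' u y|) := by
        rw [Finset.sum_add_distrib, Finset.sum_add_distrib, ← Finset.mul_sum, ← Finset.mul_sum,
          ← Finset.mul_sum]
    _ ≤ 3 * tvDist z z' := by
        have t1 : a * (∑ y : Y, |obsProb T Q z u y - obsProb T Q z' u y|) ≤ a * tvDist z z' :=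
          mul_le_mul_of_nonneg_left hΔ ha
        have t2 : b * (∑ y : Y, ∑' k : ℕ, (2:ℝ)⁻¹^(k+2) *
            |(∫ x, Q x y * fs k x ∂(beliefPush T z u))
              - ∫ x, Q x y * fs k x ∂(beliefPush T z' u)|) ≤ b * (2⁻¹ * tvDist z z') :=
          mul_le_mul_of_nonneg_left hSsum hb
        have t3 : (b * 2⁻¹) * (∑ y : Y, |obsProb T Q z u y - obsProb T Q z' u y|)
            ≤ (b * 2⁻¹) * tvDist z z' :=
          mul_le_mul_of_nonneg_left hΔ (by positivity)
        have t4 : (a + b) * tvDist z z' ≤ 1 * tvDist z z' :=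
          mul_le_mul_of_nonneg_right hab htv0
        nlinarith [t1, t2, t3, t4, htv0]
end
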